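/- arXiv:1505.02125 — 4 statements merged into one kernel-verified Lean document; each statement's English description precedes it below -/
import Mathlib

section
/- For all n ≥ 1, f_Ŝ(n) ≡ 1 (mod 3) if n = k(3k+1)/2 for some integer k with k ≡ 0 or 3 (mod 4); f_Ŝ(n) ≡ 2 (mod 3) if n = k(3k+1)/2 for some integer k with k ≡ 1 or 2 (mod 4); and f_Ŝ(n) ≡ 0 (mod 3) otherwise. -/
open Finset

noncomputable def mS (S : Finset ℕ) : ℕ := S.sup id
noncomputable def sS (S : Finset ℕ) : ℕ := sInf {a : ℕ | a ∈ S}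
noncomputable def xS (S : Finset ℕ) : ℕ := sInf {y : ℕ | Finset.Icc y (mS S) ⊆ S}

noncomputable def frank (S : Finset ℕ) : Finset ℕ :=
  if sS S + xS S ≤ mS S + 1 then
    ((S \ Finset.Icc (mS S + 1 - sS S) (mS S)).erase (sS S))
      ∪ Finset.Icc (mS S + 2 - sS S) (mS S + 1)
  else
    insert (mS S + 1 - xS S)
      ((S \ Finset.Icc (xS S) (mS S)) ∪ Finset.Icc (xS S - 1) (mS S - 1))

def IsExc (S : Finset ℕ) : Prop :=
  ∃ a b : ℕ, 1 ≤ a ∧ a ≤ b ∧ S = Finset.Icc a b ∧ (b + 1 = 2*a ∨ b + 2 = 2*a)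

lemma sum_Icc_two (a b : ℕ) : (Finset.Icc a b).sum id * 2 = (a + b) * (b + 1 - a) := by
  show (∑ i ∈ Finset.Icc a b, i) * 2 = (a + b) * (b + 1 - a)
  rcases le_or_gt a b with h | h
  · rw [← Finset.Ico_add_one_right_eq_Icc, Finset.sum_Ico_eq_sum_range]
    rw [Finset.sum_add_distrib, Finset.sum_const, add_mul, Finset.sum_range_id_mul_two,
      Finset.card_range, smul_eq_mul]
    cases' Nat.exists_eq_add_of_le h with c hc
    subst hc
    have h1 : a + c + 1 - a = c + 1 := by omega
    rw [h1, Nat.add_sub_cancel]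
    ring
  · rw [Finset.Icc_eq_empty (by omega)]
    simp; omega

lemma sInf_eq_of {T : Set ℕ} {v : ℕ} (hv : v ∈ T) (hmin : ∀ y ∈ T, v ≤ y) : sInf T = v :=
  le_antisymm (Nat.sInf_le hv) (hmin _ (Nat.sInf_mem ⟨v, hv⟩))

lemma frank_posdef (T : Finset ℕ) (h : sS T + xS T ≤ mS T + 1) :
    frank T = ((T \ Finset.Icc (mS T + 1 - sS T) (mS T)).erase (sS T))
      ∪ Finset.Icc (mS T + 2 - sS T) (mS T + 1) := by
  rw [frank, if_pos h]

lemma frank_negdef (T : Finset ℕ) (h : ¬ (sS T + xS T ≤ mS T + 1)) :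
    frank T = insert (mS T + 1 - xS T)
      ((T \ Finset.Icc (xS T) (mS T)) ∪ Finset.Icc (xS T - 1) (mS T - 1)) := by
  rw [frank, if_neg h]

section basic
variable {S : Finset ℕ} (hne : S.Nonempty) (h0 : 0 ∉ S)

lemma le_mS {a : ℕ} (ha : a ∈ S) : a ≤ mS S := Finset.le_sup (f := id) ha

include hne in
lemma mS_mem : mS S ∈ S := by
  obtain ⟨b, hb, he⟩ := Finset.exists_mem_eq_sup S hne id
  rw [mS, he]; exact hb

include hne in
lemma sS_mem : sS S ∈ S := Nat.sInf_mem (⟨hne.choose, hne.choose_spec⟩ : Set.Nonempty {a : ℕ | a ∈ S})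

lemma sS_le {a : ℕ} (ha : a ∈ S) : sS S ≤ a := Nat.sInf_le ha

include hne h0 in
lemma one_le_sS : 1 ≤ sS S := Nat.one_le_iff_ne_zero.2 (fun h => h0 (h ▸ sS_mem hne))

include hne in
lemma xS_Icc : Finset.Icc (xS S) (mS S) ⊆ S := by
  have : mS S ∈ {y : ℕ | Finset.Icc y (mS S) ⊆ S} := by
    simp only [Set.mem_setOf_eq, Finset.Icc_self]
    intro a ha
    rw [Finset.mem_singleton] at ha; subst ha; exact mS_mem hne
  exact Nat.sInf_mem (⟨_, this⟩ : Set.Nonempty {y : ℕ | Finset.Icc y (mS S) ⊆ S})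

include hne in
lemma xS_le_mS : xS S ≤ mS S := by
  apply Nat.sInf_le
  simp only [Set.mem_setOf_eq, Finset.Icc_self]
  intro a ha
  rw [Finset.mem_singleton] at ha; subst ha; exact mS_mem hne

include hne h0 in
lemma one_le_xS : 1 ≤ xS S := by
  by_contra h
  have hx0 : xS S = 0 := by omega
  have : (0:ℕ) ∈ Finset.Icc (xS S) (mS S) := by simp [hx0]
  exact h0 (xS_Icc hne this)

include hne h0 in
lemma xS_pred_not_mem : xS S - 1 ∉ S := by
  intro hmem
  have h1 := one_le_xS hne h0
  have h2 : xS S - 1 ∉ {y : ℕ | Finset.Icc y (mS S) ⊆ S} :=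
    Nat.notMem_of_lt_sInf (show xS S - 1 < xS S by omega)
  apply h2
  intro a ha
  rw [Finset.mem_Icc] at ha
  rcases Nat.eq_or_lt_of_le ha.1 with h | h
  · rwa [← h]
  · exact xS_Icc hne (Finset.mem_Icc.2 ⟨by omega, ha.2⟩)

include hne in
lemma sS_le_xS : sS S ≤ xS S := sS_le (xS_Icc hne (Finset.mem_Icc.2 ⟨le_refl _, xS_le_mS hne⟩))

include hne in
lemma sS_le_mS : sS S ≤ mS S := le_mS (sS_mem hne)

end basic
section
variable {S : Finset ℕ}

lemma roundA (hne : S.Nonempty) (h0 : 0 ∉ S) (hexc : ¬ IsExc S)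
    (hA : sS S + xS S ≤ mS S + 1) :
    (frank S).sum id = S.sum id ∧ 0 ∉ frank S ∧ (frank S).card + 1 = S.card ∧
      ¬ IsExc (frank S) ∧ frank (frank S) = S := by
  have hsM := sS_le_mS hne
  have hsx := sS_le_xS hne
  have hxM := xS_le_mS hne
  have hs1 := one_le_sS hne h0
  have hx1 := one_le_xS hne h0
  have hsS := sS_mem hne
  -- non-exceptionality gives strict staircase room
  have h2s : 2 * sS S ≤ mS S := by
    by_contra hcon
    have h2 : 2 * sS S = mS S + 1 := by omega
    have hx_eq : xS S = sS S := le_antisymm (by omega) hsx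
    apply hexc
    refine ⟨sS S, mS S, hs1, hsM, ?_, Or.inl (by omega)⟩
    ext a
    rw [Finset.mem_Icc]
    constructor
    · intro ha; exact ⟨sS_le ha, le_mS ha⟩
    · intro ha; exact xS_Icc hne (Finset.mem_Icc.2 ⟨by omega, ha.2⟩)
  have hfr := frank_posdef S hA
  have hmem : ∀ a, a ∈ frank S ↔
      ((a ∈ S ∧ a ≠ sS S ∧ a + sS S < mS S + 1) ∨ (mS S + 2 - sS S ≤ a ∧ a ≤ mS S + 1)) := by
    intro a
    rw [hfr]
    simp only [Finset.mem_union, Finset.mem_erase, Finset.mem_sdiff, Finset.mem_Icc]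
    by_cases ha : a ∈ S
    · have h1 := le_mS ha; have h2 := sS_le ha
      simp only [ha, true_and]; omega
    · simp only [ha, false_and, and_false, false_or]
  -- the interval that gets shifted
  have hIsub : Finset.Icc (mS S + 1 - sS S) (mS S) ⊆ S := by
    intro a ha
    rw [Finset.mem_Icc] at ha
    exact xS_Icc hne (Finset.mem_Icc.2 ⟨by omega, ha.2⟩)
  have htop : mS S + 1 ∈ frank S := by rw [hmem]; right; omega
  have hne' : (frank S).Nonempty := ⟨_, htop⟩
  have h0' : 0 ∉ frank S := by rw [hmem]; push_neg; exact ⟨fun h => absurd h h0, by omega⟩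
  have hsup' : mS (frank S) = mS S + 1 := by
    apply le_antisymm
    · apply Finset.sup_le
      intro a ha
      rw [hmem] at ha
      have := fun h => le_mS (S := S) (a := a) h
      simp only [id]
      rcases ha with ⟨h1, _, _⟩ | ⟨_, h2⟩
      · exact le_trans (this h1) (by omega)
      · exact h2
    · exact le_mS htop
  have hm1s_not : mS S + 1 - sS S ∉ frank S := by
    rw [hmem]; push_neg
    constructor
    · intro _ _; omega
    · intro h; omega
  have hs' : sS S + 1 ≤ sS (frank S) := by
    have hm := sS_mem hne'
    rw [hmem] at hm
    have := fun h => sS_le (S := S) (a := sS (frank S)) h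
    rcases hm with ⟨h1, h2, _⟩ | ⟨h1, _⟩
    · have := this h1; omega
    · omega
  have hx' : xS (frank S) = mS S + 2 - sS S := by
    rw [xS, hsup']
    apply sInf_eq_of
    · intro a ha
      rw [Finset.mem_Icc] at ha
      rw [hmem]; right; omega
    · intro y hy
      simp only [Set.mem_setOf_eq] at hy
      by_contra hcon
      exact hm1s_not (hy (Finset.mem_Icc.2 ⟨by omega, by omega⟩))
  refine ⟨?_, h0', ?_, ?_, ?_⟩
  -- sum
  · have hsum1 : (S \ Finset.Icc (mS S + 1 - sS S) (mS S)).sum id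
        + (Finset.Icc (mS S + 1 - sS S) (mS S)).sum id = S.sum id :=
      Finset.sum_sdiff (f := id) hIsub
    have hsnot : sS S ∉ Finset.Icc (mS S + 1 - sS S) (mS S) := by
      rw [Finset.mem_Icc]; omega
    have hsmem2 : sS S ∈ S \ Finset.Icc (mS S + 1 - sS S) (mS S) :=
      Finset.mem_sdiff.2 ⟨hsS, hsnot⟩
    have hsum2 : ((S \ Finset.Icc (mS S + 1 - sS S) (mS S)).erase (sS S)).sum id + sS S
        = (S \ Finset.Icc (mS S + 1 - sS S) (mS S)).sum id :=
      Finset.sum_erase_add (S \ Finset.Icc (mS S + 1 - sS S) (mS S)) id hsmem2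
    have hIim : Finset.Icc (mS S + 2 - sS S) (mS S + 1)
        = (Finset.Icc (mS S + 1 - sS S) (mS S)).image (· + 1) := by
      rw [Finset.image_add_right_Icc]
      congr 1
      omega
    have hcardI : (Finset.Icc (mS S + 1 - sS S) (mS S)).card = sS S := by
      rw [Nat.card_Icc]; omega
    have hsumI : (Finset.Icc (mS S + 2 - sS S) (mS S + 1)).sum id
        = (Finset.Icc (mS S + 1 - sS S) (mS S)).sum id + sS S := by
      rw [hIim, Finset.sum_image (by intro a _ b _ h; simp only at h; omega)]
      simp only [id]
      rw [Finset.sum_add_distrib, Finset.sum_const, hcardI, smul_eq_mul, mul_one]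
    have hdisj : Disjoint ((S \ Finset.Icc (mS S + 1 - sS S) (mS S)).erase (sS S))
        (Finset.Icc (mS S + 2 - sS S) (mS S + 1)) := by
      rw [Finset.disjoint_left]
      intro a ha ha'
      rw [Finset.mem_erase, Finset.mem_sdiff, Finset.mem_Icc] at ha
      rw [Finset.mem_Icc] at ha'
      have := le_mS ha.2.1
      omega
    rw [hfr, Finset.sum_union hdisj]
    simp only [id_eq, Function.id_def] at hsum1 hsum2 hsumI ⊢
    omega
  -- card
  · have hcard1 := Finset.card_sdiff_add_card_eq_card hIsub
    have hsnot : sS S ∉ Finset.Icc (mS S + 1 - sS S) (mS S) := by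
      rw [Finset.mem_Icc]; omega
    have hsmem2 : sS S ∈ S \ Finset.Icc (mS S + 1 - sS S) (mS S) :=
      Finset.mem_sdiff.2 ⟨hsS, hsnot⟩
    have hcard2 := Finset.card_erase_add_one hsmem2
    have hcardI : (Finset.Icc (mS S + 1 - sS S) (mS S)).card = sS S := by
      rw [Nat.card_Icc]; omega
    have hcardI' : (Finset.Icc (mS S + 2 - sS S) (mS S + 1)).card = sS S := by
      rw [Nat.card_Icc]; omega
    have hdisj : Disjoint ((S \ Finset.Icc (mS S + 1 - sS S) (mS S)).erase (sS S))
        (Finset.Icc (mS S + 2 - sS S) (mS S + 1)) := by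
      rw [Finset.disjoint_left]
      intro a ha ha'
      rw [Finset.mem_erase, Finset.mem_sdiff, Finset.mem_Icc] at ha
      rw [Finset.mem_Icc] at ha'
      have := le_mS ha.2.1
      omega
    rw [hfr, Finset.card_union_of_disjoint hdisj, hcardI']
    omega
  -- not exceptional
  · rintro ⟨a, b, ha1, hab, hEq, hshape⟩
    have hbtop : b = mS S + 1 := by
      have h1 : b ∈ frank S := hEq ▸ Finset.mem_Icc.2 ⟨hab, le_refl b⟩
      have h2 : mS S + 1 ∈ Finset.Icc a b := hEq ▸ htop
      rw [Finset.mem_Icc] at h2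
      rw [hmem] at h1
      rcases h1 with ⟨h3, _, _⟩ | ⟨_, h3⟩
      · have := le_mS h3; omega
      · omega
    have haval : a = mS S + 2 - sS S := by
      have h1 : mS S + 2 - sS S ∈ Finset.Icc a b := by
        rw [← hEq, hmem]; right; omega
      rw [Finset.mem_Icc] at h1
      by_contra hcon
      have h2 : mS S + 1 - sS S ∈ Finset.Icc a b := Finset.mem_Icc.2 ⟨by omega, by omega⟩
      rw [← hEq] at h2
      exact hm1s_not h2
    omega
  -- involution
  · have hcond : ¬ (sS (frank S) + xS (frank S) ≤ mS (frank S) + 1) := by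
      rw [hx', hsup']; omega
    rw [frank_negdef _ hcond, hx', hsup']
    have e1 : mS S + 1 + 1 - (mS S + 2 - sS S) = sS S := by omega
    have e2 : mS S + 2 - sS S - 1 = mS S + 1 - sS S := by omega
    have e3 : mS S + 1 - 1 = mS S := by omega
    rw [e1, e2, e3]
    ext a
    simp only [Finset.mem_insert, Finset.mem_union, Finset.mem_sdiff, Finset.mem_Icc, hmem]
    by_cases ha : a ∈ S
    · have h1 := le_mS ha; have h2 := sS_le ha
      simp only [ha, true_and, iff_true]
      omega
    · have h9 : ¬(mS S + 1 - sS S ≤ a ∧ a ≤ mS S) := fun h => ha (hIsub (Finset.mem_Icc.2 h))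
      have h10 : a ≠ sS S := fun h => ha (h ▸ hsS)
      simp only [ha, false_and, and_false, false_or, iff_false]
      omega
end
section
variable {S : Finset ℕ}

lemma roundB (hne : S.Nonempty) (h0 : 0 ∉ S) (hexc : ¬ IsExc S)
    (hB : ¬ (sS S + xS S ≤ mS S + 1)) :
    (frank S).sum id = S.sum id ∧ 0 ∉ frank S ∧ S.card + 1 = (frank S).card ∧
      ¬ IsExc (frank S) ∧ frank (frank S) = S := by
  have hsM := sS_le_mS hne
  have hsx := sS_le_xS hne
  have hxM := xS_le_mS hne
  have hs1 := one_le_sS hne h0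
  have hx1 := one_le_xS hne h0
  have hsS := sS_mem hne
  have hXIcc := xS_Icc hne
  have hxpred := xS_pred_not_mem hne h0
  have h2x : mS S + 3 ≤ 2 * xS S := by
    by_contra hcon
    have hxs : sS S = xS S := by omega
    have h2 : 2 * xS S = mS S + 2 := by omega
    apply hexc
    refine ⟨xS S, mS S, hx1, hxM, ?_, Or.inr (by omega)⟩
    ext a
    rw [Finset.mem_Icc]
    constructor
    · intro ha; exact ⟨hxs ▸ sS_le ha, le_mS ha⟩
    · intro ha; exact hXIcc (Finset.mem_Icc.2 ha)
  have hfr := frank_negdef S hB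
  have hmem : ∀ a, a ∈ frank S ↔
      (a = mS S + 1 - xS S ∨ (a ∈ S ∧ a < xS S) ∨ (xS S - 1 ≤ a ∧ a ≤ mS S - 1)) := by
    intro a
    rw [hfr]
    simp only [Finset.mem_insert, Finset.mem_union, Finset.mem_sdiff, Finset.mem_Icc]
    by_cases ha : a ∈ S
    · have h1 := le_mS ha; have h2 := sS_le ha
      simp only [ha, true_and]; omega
    · simp only [ha, false_and, false_or]
  have htop : mS S - 1 ∈ frank S := by rw [hmem]; right; right; omega
  have hne' : (frank S).Nonempty := ⟨_, htop⟩
  have h0' : 0 ∉ frank S := by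
    rw [hmem]; push_neg
    refine ⟨by omega, fun h => absurd h h0, by omega⟩
  have hsup' : mS (frank S) = mS S - 1 := by
    apply le_antisymm
    · apply Finset.sup_le
      intro a ha
      rw [hmem] at ha
      simp only [id]
      rcases ha with h | ⟨h1, h2⟩ | ⟨_, h2⟩
      · omega
      · have := le_mS h1; omega
      · omega
    · exact le_mS htop
  have hs' : sS (frank S) = mS S + 1 - xS S := by
    apply sInf_eq_of
    · show mS S + 1 - xS S ∈ frank S
      rw [hmem]; left; rfl
    · intro a ha
      have ha' : a ∈ frank S := ha
      rw [hmem] at ha'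
      rcases ha' with h | ⟨h1, h2⟩ | ⟨h1, _⟩
      · omega
      · have := sS_le h1; omega
      · omega
  have hcond : sS (frank S) + xS (frank S) ≤ mS (frank S) + 1 := by
    have hxle : xS (frank S) ≤ xS S - 1 := by
      rw [xS, hsup']
      apply Nat.sInf_le
      simp only [Set.mem_setOf_eq]
      intro a ha
      rw [Finset.mem_Icc] at ha
      rw [hmem]; right; right; exact ha
    rw [hs', hsup']
    omega
  have hrnot : mS S + 1 - xS S ∉ (S \ Finset.Icc (xS S) (mS S)) ∪ Finset.Icc (xS S - 1) (mS S - 1) := by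
    simp only [Finset.mem_union, Finset.mem_sdiff, Finset.mem_Icc]
    push_neg
    constructor
    · intro h
      have := sS_le h
      omega
    · intro h; omega
  have hdisj : Disjoint (S \ Finset.Icc (xS S) (mS S)) (Finset.Icc (xS S - 1) (mS S - 1)) := by
    rw [Finset.disjoint_left]
    intro a ha ha'
    rw [Finset.mem_sdiff, Finset.mem_Icc] at ha
    rw [Finset.mem_Icc] at ha'
    have : a = xS S - 1 := by omega
    exact hxpred (this ▸ ha.1)
  have hIim : Finset.Icc (xS S) (mS S) = (Finset.Icc (xS S - 1) (mS S - 1)).image (· + 1) := by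
    rw [Finset.image_add_right_Icc]
    congr 1 <;> omega
  have hcardJ : (Finset.Icc (xS S - 1) (mS S - 1)).card = mS S + 1 - xS S := by
    rw [Nat.card_Icc]; omega
  refine ⟨?_, h0', ?_, ?_, ?_⟩
  · have hsum1 : (S \ Finset.Icc (xS S) (mS S)).sum id + (Finset.Icc (xS S) (mS S)).sum id
        = S.sum id := Finset.sum_sdiff (f := id) hXIcc
    have hsumI : (Finset.Icc (xS S) (mS S)).sum id
        = (Finset.Icc (xS S - 1) (mS S - 1)).sum id + (mS S + 1 - xS S) := by
      rw [hIim, Finset.sum_image (by intro a _ b _ h; simp only at h; omega)]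
      simp only [id]
      rw [Finset.sum_add_distrib, Finset.sum_const, hcardJ, smul_eq_mul, mul_one]
    rw [hfr, Finset.sum_insert hrnot, Finset.sum_union hdisj]
    simp only [id_eq, Function.id_def] at hsum1 hsumI ⊢
    omega
  · have hcard1 := Finset.card_sdiff_add_card_eq_card hXIcc
    have hcardI : (Finset.Icc (xS S) (mS S)).card = mS S + 1 - xS S := by
      rw [Nat.card_Icc]
    rw [hfr, Finset.card_insert_of_notMem hrnot, Finset.card_union_of_disjoint hdisj, hcardJ]
    omega
  · rintro ⟨a, b, ha1, hab, hEq, hshape⟩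
    have hbtop : b = mS S - 1 := by
      have h1 : b ∈ frank S := hEq ▸ Finset.mem_Icc.2 ⟨hab, le_refl b⟩
      have h2 : mS S - 1 ∈ Finset.Icc a b := hEq ▸ htop
      rw [Finset.mem_Icc] at h2
      rw [hmem] at h1
      rcases h1 with h | ⟨h3, h4⟩ | ⟨_, h3⟩
      · omega
      · have := le_mS h3; omega
      · omega
    have haval : a = mS S + 1 - xS S := by
      have h1 : mS S + 1 - xS S ∈ Finset.Icc a b := by
        rw [← hEq, hmem]; left; rfl
      rw [Finset.mem_Icc] at h1
      have h2 : a ∈ frank S := by rw [hEq]; exact Finset.mem_Icc.2 ⟨le_refl a, hab⟩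
      rw [hmem] at h2
      rcases h2 with h | ⟨h3, h4⟩ | ⟨h3, _⟩
      · omega
      · have := sS_le h3; omega
      · omega
    omega
  · rw [frank_posdef _ hcond, hs', hsup']
    have e1 : mS S - 1 + 1 - (mS S + 1 - xS S) = xS S - 1 := by omega
    have e2 : mS S - 1 + 2 - (mS S + 1 - xS S) = xS S := by omega
    have e3 : mS S - 1 + 1 = mS S := by omega
    rw [e1, e2, e3]
    ext a
    simp only [Finset.mem_union, Finset.mem_erase, Finset.mem_sdiff, Finset.mem_Icc, hmem]
    by_cases ha : a ∈ S
    · have h1 := le_mS ha; have h2 := sS_le ha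
      have h11 : a ≠ xS S - 1 := fun h => hxpred (h ▸ ha)
      simp only [ha, true_and, iff_true]
      omega
    · have h9 : ¬(xS S ≤ a ∧ a ≤ mS S) := fun h => ha (hXIcc (Finset.mem_Icc.2 h))
      simp only [ha, false_and, and_false, false_or, iff_false]
      omega
end

lemma frank_spec {S : Finset ℕ} (hne : S.Nonempty) (h0 : 0 ∉ S) (hexc : ¬ IsExc S) :
    (frank S).sum id = S.sum id ∧ 0 ∉ frank S ∧ ¬ IsExc (frank S) ∧ frank (frank S) = S ∧
      ((frank S).card + 1 = S.card ∨ S.card + 1 = (frank S).card) := by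
  by_cases h : sS S + xS S ≤ mS S + 1
  · obtain ⟨h1, h2, h3, h4, h5⟩ := roundA hne h0 hexc h
    exact ⟨h1, h2, h4, h5, Or.inl h3⟩
  · obtain ⟨h1, h2, h3, h4, h5⟩ := roundB hne h0 hexc h
    exact ⟨h1, h2, h4, h5, Or.inr h3⟩

/-- The finset of finsets of positive integers with sum `n`. -/
def Sg (n : ℕ) : Finset (Finset ℕ) :=
  (Finset.range (n+1)).powerset.filter (fun S => 0 ∉ S ∧ S.sum id = n)

lemma mem_Sg {n : ℕ} {S : Finset ℕ} : S ∈ Sg n ↔ 0 ∉ S ∧ S.sum id = n := by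
  constructor
  · intro h; exact (Finset.mem_filter.1 h).2
  · intro h
    refine Finset.mem_filter.2 ⟨Finset.mem_powerset.2 (fun a ha => ?_), h⟩
    have : a ≤ S.sum id := Finset.single_le_sum (f := id) (fun i _ => Nat.zero_le i) ha
    rw [Finset.mem_range]; omega

lemma Sg_nonempty {n : ℕ} {S : Finset ℕ} (hn : 1 ≤ n) (h : S ∈ Sg n) : S.Nonempty := by
  rcases S.eq_empty_or_nonempty with rfl | h'
  · have := (mem_Sg.1 h).2; simp at this; omega
  · exact h'

lemma neg_pow_cancel {c c' : ℕ} (h : c + 1 = c' ∨ c' + 1 = c) : (-1:ℤ)^c + (-1:ℤ)^c' = 0 := by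
  rcases h with h | h
  · subst h; rw [pow_succ]; ring
  · subst h; rw [pow_succ]; ring

lemma frank_mem_Sg {n : ℕ} {S : Finset ℕ} (hn : 1 ≤ n) (hS : S ∈ Sg n) (hexc : ¬ IsExc S) :
    frank S ∈ Sg n := by
  obtain ⟨h0, hsum⟩ := mem_Sg.1 hS
  obtain ⟨h1, h2, _, _, _⟩ := frank_spec (Sg_nonempty hn hS) h0 hexc
  exact mem_Sg.2 ⟨h2, by rw [h1, hsum]⟩

lemma sum_frank_zero (n : ℕ) (hn : 1 ≤ n) (h : ∀ S ∈ Sg n, ¬ IsExc S) :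
    ∑ S ∈ Sg n, (-1 : ℤ)^S.card = 0 := by
  apply Finset.sum_involution (fun S _ => frank S)
  · intro S hS
    obtain ⟨h0, _⟩ := mem_Sg.1 hS
    obtain ⟨_, _, _, _, h5⟩ := frank_spec (Sg_nonempty hn hS) h0 (h S hS)
    exact neg_pow_cancel (by omega)
  · intro S hS _
    obtain ⟨h0, _⟩ := mem_Sg.1 hS
    obtain ⟨_, _, _, _, h5⟩ := frank_spec (Sg_nonempty hn hS) h0 (h S hS)
    intro hcon
    rw [hcon] at h5
    omega
  · intro S hS
    exact frank_mem_Sg hn hS (h S hS)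
  · intro S hS
    obtain ⟨h0, _⟩ := mem_Sg.1 hS
    exact (frank_spec (Sg_nonempty hn hS) h0 (h S hS)).2.2.2.1

lemma sum_frank_exc (n : ℕ) (hn : 1 ≤ n) (e : Finset ℕ) (he : e ∈ Sg n) (hexc_e : IsExc e)
    (huniq : ∀ S ∈ Sg n, IsExc S → S = e) :
    ∑ S ∈ Sg n, (-1 : ℤ)^S.card = (-1)^e.card := by
  rw [← Finset.add_sum_erase _ _ he]
  have hz : ∑ S ∈ (Sg n).erase e, (-1 : ℤ)^S.card = 0 := by
    have hmem : ∀ S ∈ (Sg n).erase e, S ∈ Sg n ∧ ¬ IsExc S := by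
      intro S hS
      have h1 := Finset.mem_of_mem_erase hS
      have h2 := Finset.ne_of_mem_erase hS
      exact ⟨h1, fun hc => h2 (huniq S h1 hc)⟩
    apply Finset.sum_involution (fun S _ => frank S)
    · intro S hS
      obtain ⟨h1, h2⟩ := hmem S hS
      obtain ⟨h3, h4⟩ := mem_Sg.1 h1
      obtain ⟨_, _, _, _, h5⟩ := frank_spec (Sg_nonempty hn h1) h3 h2
      exact neg_pow_cancel (by omega)
    · intro S hS _
      obtain ⟨h1, h2⟩ := hmem S hS
      obtain ⟨h3, h4⟩ := mem_Sg.1 h1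
      obtain ⟨_, _, _, _, h5⟩ := frank_spec (Sg_nonempty hn h1) h3 h2
      intro hcon
      rw [hcon] at h5
      omega
    · intro S hS
      obtain ⟨h1, h2⟩ := hmem S hS
      refine Finset.mem_erase.2 ⟨?_, frank_mem_Sg hn h1 h2⟩
      obtain ⟨h3, _⟩ := mem_Sg.1 h1
      intro hcon
      exact (frank_spec (Sg_nonempty hn h1) h3 h2).2.2.1 (hcon ▸ hexc_e)
    · intro S hS
      obtain ⟨h1, h2⟩ := hmem S hS
      obtain ⟨h3, _⟩ := mem_Sg.1 h1
      exact (frank_spec (Sg_nonempty hn h1) h3 h2).2.2.2.1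
  rw [hz, add_zero]

lemma pent_inj {k k' : ℤ} (h : k*(3*k+1) = k'*(3*k'+1)) : k = k' := by
  have h2 : (k - k') * (3*(k + k') + 1) = 0 := by linear_combination h
  rcases mul_eq_zero.1 h2 with h3 | h3 <;> omega

lemma exc_data {n : ℕ} {S : Finset ℕ} (hS : S ∈ Sg n) (h : IsExc S) :
    ∃ k : ℤ, k*(3*k+1) = 2*(n:ℤ) ∧ (Even S.card ↔ Even k) ∧
      ((0 < k ∧ S = Finset.Icc (k.toNat + 1) (2*k.toNat))
        ∨ (k < 0 ∧ S = Finset.Icc ((-k).toNat) (2*(-k).toNat - 1))) := by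
  obtain ⟨a, b, ha1, hab, rfl, hshape⟩ := h
  obtain ⟨h0, hsum⟩ := mem_Sg.1 hS
  have hs2 := sum_Icc_two a b
  rw [hsum] at hs2
  have hcard : (Finset.Icc a b).card = b + 1 - a := Nat.card_Icc a b
  rcases hshape with hsh | hsh
  -- b + 1 = 2a : k = -a
  · have hc : b + 1 - a = a := by omega
    rw [hc] at hs2
    have hz : (n:ℤ)*2 = ((a:ℤ)+(b:ℤ))*(a:ℤ) := by exact_mod_cast hs2
    have hb' : (b:ℤ) + 1 = 2*(a:ℤ) := by exact_mod_cast hsh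
    refine ⟨-(a:ℤ), by linear_combination (-1:ℤ)*hz - (a:ℤ)*hb', ?_, Or.inr ⟨by omega, ?_⟩⟩
    · rw [hcard, hc]
      simp [even_neg, Int.even_coe_nat]
    · have h1 : ((-(-(a:ℤ))).toNat) = a := by simp
      rw [h1]
      congr 1
      omega
  -- b + 2 = 2a : k = a - 1
  · obtain ⟨j, rfl⟩ : ∃ j, a = j + 1 := ⟨a - 1, by omega⟩
    have hb : b = 2*j := by omega
    subst hb
    have hj1 : 1 ≤ j := by omega
    have hc : 2*j + 1 - (j+1) = j := by omega
    rw [hc] at hs2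
    have hz : (n:ℤ)*2 = ((j:ℤ)+1+2*(j:ℤ))*(j:ℤ) := by exact_mod_cast hs2
    refine ⟨(j:ℤ), by linear_combination (-1:ℤ)*hz, ?_, Or.inl ⟨by omega, ?_⟩⟩
    · rw [hcard, hc]
      simp [Int.even_coe_nat]
    · have h1 : ((j:ℤ)).toNat = j := by simp
      rw [h1]

lemma exc_exists {n : ℕ} (hn : 1 ≤ n) {k : ℤ} (hk : k*(3*k+1) = 2*(n:ℤ)) :
    ∃ e ∈ Sg n, IsExc e ∧ (Even e.card ↔ Even k) := by
  have hk0 : k ≠ 0 := by rintro rfl; simp at hk; omega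
  rcases lt_or_gt_of_ne hk0 with hneg | hpos
  -- k < 0 : e = Icc j (2j-1), j = -k
  · set j := (-k).toNat with hj
    have hjk : ((j:ℤ)) = -k := Int.toNat_of_nonneg (by omega)
    have hj1 : 1 ≤ j := by omega
    have hnat : 3*(j*j) = 2*n + j := by
      have : 3*((j:ℤ)*(j:ℤ)) = 2*(n:ℤ) + (j:ℤ) := by
        rw [hjk]; linear_combination hk
      exact_mod_cast this
    refine ⟨Finset.Icc j (2*j - 1), mem_Sg.2 ⟨by simp [Finset.mem_Icc]; omega, ?_⟩,
        ⟨j, 2*j - 1, hj1, by omega, rfl, Or.inl (by omega)⟩, ?_⟩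
    · have hs2 := sum_Icc_two j (2*j - 1)
      have hc : 2*j - 1 + 1 - j = j := by omega
      have hd : j + (2*j - 1) = 3*j - 1 := by omega
      rw [hc, hd] at hs2
      have h5 : (3*j-1)*j = 3*(j*j) - j := by rw [Nat.sub_mul, one_mul, mul_assoc]
      rw [h5] at hs2
      omega
    · rw [Nat.card_Icc]
      have hc : 2*j - 1 + 1 - j = j := by omega
      rw [hc]
      rw [show k = -(j:ℤ) by omega]
      simp [even_neg, Int.even_coe_nat]
  -- k > 0 : e = Icc (j+1) (2j), j = k
  · set j := k.toNat with hj
    have hjk : ((j:ℤ)) = k := Int.toNat_of_nonneg (by omega)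
    have hj1 : 1 ≤ j := by omega
    have hnat : 3*(j*j) + j = 2*n := by
      have : 3*((j:ℤ)*(j:ℤ)) + (j:ℤ) = 2*(n:ℤ) := by
        rw [hjk]; linear_combination hk
      exact_mod_cast this
    refine ⟨Finset.Icc (j+1) (2*j), mem_Sg.2 ⟨by simp [Finset.mem_Icc], ?_⟩,
        ⟨j+1, 2*j, by omega, by omega, rfl, Or.inr (by omega)⟩, ?_⟩
    · have hs2 := sum_Icc_two (j+1) (2*j)
      have hc : 2*j + 1 - (j+1) = j := by omega
      rw [hc] at hs2
      have h5 : (j+1+2*j)*j = 3*(j*j) + j := by ring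
      rw [h5] at hs2
      omega
    · rw [Nat.card_Icc]
      have hc : 2*j + 1 - (j+1) = j := by omega
      rw [hc]
      rw [show k = (j:ℤ) by omega]
      simp [Int.even_coe_nat]

lemma sum_sign_pent {n : ℕ} (hn : 1 ≤ n) {k : ℤ} (hk : k*(3*k+1) = 2*(n:ℤ)) :
    ∑ S ∈ Sg n, (-1 : ℤ)^S.card = if Even k then 1 else -1 := by
  obtain ⟨e, he, hexc, hpar⟩ := exc_exists hn hk
  have huniq : ∀ S ∈ Sg n, IsExc S → S = e := by
    intro S hS hx
    obtain ⟨k1, hk1, _, hbr1⟩ := exc_data hS hx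
    obtain ⟨k2, hk2, _, hbr2⟩ := exc_data he hexc
    have hke : k1 = k2 := pent_inj (hk1.trans hk2.symm)
    subst hke
    rcases hbr1 with ⟨hs1, rfl⟩ | ⟨hs1, rfl⟩ <;> rcases hbr2 with ⟨hs2, rfl⟩ | ⟨hs2, rfl⟩
    · rfl
    · omega
    · omega
    · rfl
  rw [sum_frank_exc n hn e he hexc huniq]
  by_cases hev : Even k
  · rw [if_pos hev, Even.neg_one_pow (hpar.2 hev)]
  · rw [if_neg hev]
    have : ¬ Even e.card := fun h => hev (hpar.1 h)
    rw [Odd.neg_one_pow (Nat.not_even_iff_odd.1 this)]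

lemma sum_sign_zero {n : ℕ} (hn : 1 ≤ n) (h : ¬ ∃ k : ℤ, k*(3*k+1) = 2*(n:ℤ)) :
    ∑ S ∈ Sg n, (-1 : ℤ)^S.card = 0 := by
  apply sum_frank_zero n hn
  intro S hS hx
  obtain ⟨k1, hk1, _, _⟩ := exc_data hS hx
  exact h ⟨k1, hk1⟩

lemma multiset_card_le_sum (s : Multiset ℕ) (h : ∀ i ∈ s, 0 < i) : s.card ≤ s.sum := by
  induction s using Multiset.induction with
  | empty => simp
  | cons a s ih =>
    simp only [Multiset.card_cons, Multiset.sum_cons]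
    have h1 := h a (Multiset.mem_cons_self a s)
    have h2 := ih (fun i hi => h i (Multiset.mem_cons_of_mem hi))
    omega

lemma dist_sum (n : ℕ) :
    ∑ P ∈ Nat.Partition.distincts n, (-1:ℤ)^(P.parts.card) = ∑ S ∈ Sg n, (-1:ℤ)^S.card := by
  apply Finset.sum_bij (fun P _ => P.parts.toFinset)
  · intro P hP
    have hnd : P.parts.Nodup := (Finset.mem_filter.1 hP).2
    apply mem_Sg.2
    constructor
    · intro h
      have := P.parts_pos (Multiset.mem_toFinset.1 h)
      omega
    · show Finset.sum _ id = n
      rw [Finset.sum, Multiset.map_id, Multiset.toFinset_val, Multiset.dedup_eq_self.2 hnd]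
      exact P.parts_sum
  · intro P hP Q hQ h
    have hndP : P.parts.Nodup := (Finset.mem_filter.1 hP).2
    have hndQ : Q.parts.Nodup := (Finset.mem_filter.1 hQ).2
    have h2 := congrArg Finset.val h
    rw [Multiset.toFinset_val, Multiset.toFinset_val, Multiset.dedup_eq_self.2 hndP,
      Multiset.dedup_eq_self.2 hndQ] at h2
    exact Nat.Partition.ext h2
  · intro S hS
    obtain ⟨h0, hsum⟩ := mem_Sg.1 hS
    refine ⟨⟨S.val, fun {i} hi => Nat.pos_of_ne_zero (fun h => h0 (h ▸ hi)), ?_⟩, ?_, ?_⟩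
    · show S.val.sum = n
      rw [← hsum, Finset.sum, Multiset.map_id]
    · exact Finset.mem_filter.2 ⟨Finset.mem_univ _, S.nodup⟩
    · show S.val.toFinset = S
      exact Finset.val_toFinset S
  · intro P hP
    have hnd : P.parts.Nodup := (Finset.mem_filter.1 hP).2
    rw [Multiset.card_toFinset, Multiset.dedup_eq_self.2 hnd]

open scoped Classical

/-- Number of irreducible spin characters of the double cover of `S(n)`:
self-associate spin characters (labelled by partitions of `n` into distinct parts `λ`
with `n - ℓ(λ)` even) counted once, non-self-associate pairs counted twice. -/
noncomputable def fShat (n : ℕ) : ℕ :=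
  ((Nat.Partition.distincts n).filter (fun l => Even (n - l.parts.card))).card
    + 2 * ((Nat.Partition.distincts n).filter (fun l => ¬ Even (n - l.parts.card))).card

lemma AB_eq (n : ℕ) :
    ((((Nat.Partition.distincts n).filter (fun l => Even (n - l.parts.card))).card : ℤ)
      - (((Nat.Partition.distincts n).filter (fun l => ¬ Even (n - l.parts.card))).card : ℤ))
      * (-1:ℤ)^n = ∑ S ∈ Sg n, (-1:ℤ)^S.card := by
  rw [← dist_sum]
  rw [← Finset.sum_filter_add_sum_filter_not (Nat.Partition.distincts n)
    (fun l => Even (n - l.parts.card)) (fun P => (-1:ℤ)^(P.parts.card))]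
  have hcle : ∀ P : Nat.Partition n, P.parts.card ≤ n := by
    intro P
    have := multiset_card_le_sum P.parts (fun i hi => P.parts_pos hi)
    rw [P.parts_sum] at this
    exact this
  have hA : ∀ P ∈ (Nat.Partition.distincts n).filter (fun l => Even (n - l.parts.card)),
      (-1:ℤ)^(P.parts.card) = (-1:ℤ)^n := by
    intro P hP
    have hev := (Finset.mem_filter.1 hP).2
    have hle := hcle P
    have h1 : (-1:ℤ)^(n - P.parts.card) = 1 := Even.neg_one_pow hev
    have h2 : (-1:ℤ)^n = (-1:ℤ)^(n - P.parts.card) * (-1:ℤ)^(P.parts.card) := by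
      rw [← pow_add]
      congr 1
      omega
    rw [h2, h1, one_mul]
  have hB : ∀ P ∈ (Nat.Partition.distincts n).filter (fun l => ¬ Even (n - l.parts.card)),
      (-1:ℤ)^(P.parts.card) = -(-1:ℤ)^n := by
    intro P hP
    have hev := (Finset.mem_filter.1 hP).2
    have hle := hcle P
    have h1 : (-1:ℤ)^(n - P.parts.card) = -1 :=
      Odd.neg_one_pow (Nat.not_even_iff_odd.1 hev)
    have h2 : (-1:ℤ)^n = (-1:ℤ)^(n - P.parts.card) * (-1:ℤ)^(P.parts.card) := by
      rw [← pow_add]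
      congr 1
      omega
    rw [h2, h1]
    ring
  rw [Finset.sum_congr rfl hA, Finset.sum_congr rfl hB, Finset.sum_const, Finset.sum_const]
  simp only [nsmul_eq_mul]
  ring

theorem spchar_hatS_mod3 (n : ℕ) (hn : 1 ≤ n) :
    ((∃ k : ℤ, k * (3 * k + 1) = 2 * (n : ℤ) ∧ (k % 4 = 0 ∨ k % 4 = 3)) → fShat n % 3 = 1) ∧
    ((∃ k : ℤ, k * (3 * k + 1) = 2 * (n : ℤ) ∧ (k % 4 = 1 ∨ k % 4 = 2)) → fShat n % 3 = 2) ∧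
    ((¬ ∃ k : ℤ, k * (3 * k + 1) = 2 * (n : ℤ)) → fShat n % 3 = 0) := by
  have hAB := AB_eq n
  set A := ((Nat.Partition.distincts n).filter (fun l => Even (n - l.parts.card))) with hA
  set B := ((Nat.Partition.distincts n).filter (fun l => ¬ Even (n - l.parts.card))) with hB
  have hfS : fShat n = A.card + 2 * B.card := rfl
  refine ⟨?_, ?_, ?_⟩
  · rintro ⟨k, hk, hk4 | hk4⟩
    · obtain ⟨t, rfl⟩ : ∃ t, k = 4*t := ⟨k/4, by omega⟩
      have hev : Even (4*t) := ⟨2*t, by ring⟩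
      have hsum := sum_sign_pent hn hk
      rw [if_pos hev] at hsum
      have h2 : 2*(n:ℤ) = 48*(t*t) + 4*t := by linear_combination -hk
      have hnev : Even n := by
        rw [Nat.even_iff]
        generalize t*t = u at h2
        omega
      rw [Even.neg_one_pow hnev, mul_one, hsum] at hAB
      rw [hfS]
      omega
    · obtain ⟨t, rfl⟩ : ∃ t, k = 4*t + 3 := ⟨k/4, by omega⟩
      have hev : ¬ Even (4*t + 3) := by rw [Int.even_iff]; omega
      have hsum := sum_sign_pent hn hk
      rw [if_neg hev] at hsum
      have h2 : 2*(n:ℤ) = 48*(t*t) + 76*t + 30 := by linear_combination -hk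
      have hnod : Odd n := by
        rw [Nat.odd_iff]
        generalize t*t = u at h2
        omega
      rw [Odd.neg_one_pow hnod, hsum] at hAB
      rw [hfS]
      omega
  · rintro ⟨k, hk, hk4 | hk4⟩
    · obtain ⟨t, rfl⟩ : ∃ t, k = 4*t + 1 := ⟨k/4, by omega⟩
      have hev : ¬ Even (4*t + 1) := by rw [Int.even_iff]; omega
      have hsum := sum_sign_pent hn hk
      rw [if_neg hev] at hsum
      have h2 : 2*(n:ℤ) = 48*(t*t) + 28*t + 4 := by linear_combination -hk
      have hnev : Even n := by
        rw [Nat.even_iff]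
        generalize t*t = u at h2
        omega
      rw [Even.neg_one_pow hnev, mul_one, hsum] at hAB
      rw [hfS]
      omega
    · obtain ⟨t, rfl⟩ : ∃ t, k = 4*t + 2 := ⟨k/4, by omega⟩
      have hev : Even (4*t + 2) := ⟨2*t+1, by ring⟩
      have hsum := sum_sign_pent hn hk
      rw [if_pos hev] at hsum
      have h2 : 2*(n:ℤ) = 48*(t*t) + 52*t + 14 := by linear_combination -hk
      have hnod : Odd n := by
        rw [Nat.odd_iff]
        generalize t*t = u at h2
        omega
      rw [Odd.neg_one_pow hnod, hsum] at hAB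
      rw [hfS]
      omega
  · intro h
    have hsum := sum_sign_zero hn h
    rw [hsum] at hAB
    have hpow : (-1:ℤ)^n ≠ 0 := by
      rcases Nat.even_or_odd n with he | ho
      · rw [Even.neg_one_pow he]; omega
      · rw [Odd.neg_one_pow ho]; omega
    have := mul_eq_zero.1 hAB
    rcases this with h1 | h1
    · rw [hfS]; omega
    · exact absurd h1 hpow
end

section
/- Let p ≥ 5 be prime and let r with 1 ≤ r ≤ p−1 be such that 24r+1 is a quadratic nonresidue modulo p. Then for all n ≥ 0, f_Ŝ(pn + r) ≡ 0 (mod 3). -/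
open scoped Classical

open Finset

private def pmax (S : Finset ℕ) : ℕ := S.sup id
private noncomputable def pmin (S : Finset ℕ) : ℕ := sInf (S : Set ℕ)
private noncomputable def prun (S : Finset ℕ) : ℕ := sInf {x : ℕ | Finset.Icc x (pmax S) ⊆ S}

private noncomputable def fr1 (S : Finset ℕ) : Finset ℕ :=
  ((S.erase (pmin S)) \ Finset.Icc (pmax S - pmin S + 1) (pmax S)) ∪
    Finset.Icc (pmax S - pmin S + 2) (pmax S + 1)

private noncomputable def fr2 (S : Finset ℕ) : Finset ℕ :=
  ((S \ Finset.Icc (prun S) (pmax S)) ∪ Finset.Icc (prun S - 1) (pmax S - 1)) ∪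
    {pmax S + 1 - prun S}

private noncomputable def franklin (S : Finset ℕ) : Finset ℕ :=
  if pmin S ≤ pmax S + 1 - prun S then fr1 S else fr2 S

-- copy base lemmas (will concatenate later)
private lemma le_pmax {S : Finset ℕ} {x : ℕ} (hx : x ∈ S) : x ≤ pmax S :=
  Finset.le_sup (f := id) hx

private lemma pmax_mem {S : Finset ℕ} (h : S.Nonempty) : pmax S ∈ S := by
  obtain ⟨b, hb, h2⟩ := Finset.exists_max_image S id h
  have : pmax S = b := le_antisymm (Finset.sup_le h2) (Finset.le_sup (f := id) hb)
  rw [this]; exact hb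

private lemma pmin_mem {S : Finset ℕ} (h : S.Nonempty) : pmin S ∈ S := by
  have := Nat.sInf_mem (s := (S : Set ℕ)) (by exact_mod_cast h.to_set)
  exact_mod_cast this

private lemma pmin_le {S : Finset ℕ} {x : ℕ} (hx : x ∈ S) : pmin S ≤ x :=
  Nat.sInf_le (by exact_mod_cast hx)

private lemma prun_subset {S : Finset ℕ} (h : S.Nonempty) :
    Finset.Icc (prun S) (pmax S) ⊆ S := by
  have hne : {x : ℕ | Finset.Icc x (pmax S) ⊆ S}.Nonempty := by
    refine ⟨pmax S, ?_⟩
    intro y hy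
    simp only [Finset.mem_Icc] at hy
    have : y = pmax S := le_antisymm hy.2 hy.1
    subst this; exact pmax_mem h
  exact Nat.sInf_mem hne

private lemma prun_le_pmax {S : Finset ℕ} (h : S.Nonempty) : prun S ≤ pmax S := by
  apply Nat.sInf_le
  intro y hy
  simp only [Finset.mem_Icc] at hy
  have : y = pmax S := le_antisymm hy.2 hy.1
  subst this; exact pmax_mem h

private lemma prun_pos {S : Finset ℕ} (h0 : 0 ∉ S) (h : S.Nonempty) : 1 ≤ prun S := by
  by_contra hc
  push_neg at hc
  interval_cases h' : prun S
  · have := prun_subset h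
    rw [h'] at this
    exact h0 (this (by simp [Finset.mem_Icc]))

private lemma prun_pred_not_mem {S : Finset ℕ} (h0 : 0 ∉ S) (h : S.Nonempty) :
    prun S - 1 ∉ S := by
  intro hmem
  have h1 := prun_pos h0 h
  have h2 := prun_subset h
  have h3 := prun_le_pmax h
  have hsub : Finset.Icc (prun S - 1) (pmax S) ⊆ S := by
    intro y hy
    simp only [Finset.mem_Icc] at hy
    rcases eq_or_lt_of_le hy.1 with he | hl
    · rwa [← he]
    · exact h2 (by simp only [Finset.mem_Icc]; omega)
  have : prun S ≤ prun S - 1 := Nat.sInf_le hsub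
  omega

private lemma prun_mem {S : Finset ℕ} (h : S.Nonempty) : prun S ∈ S :=
  prun_subset h (by simp [Finset.mem_Icc, prun_le_pmax h])

private lemma pmin_le_prun {S : Finset ℕ} (h : S.Nonempty) : pmin S ≤ prun S :=
  pmin_le (prun_mem h)

private lemma pmin_pos {S : Finset ℕ} (h0 : 0 ∉ S) (h : S.Nonempty) : 1 ≤ pmin S := by
  have := pmin_mem h
  rcases Nat.eq_zero_or_pos (pmin S) with he | hp
  · rw [he] at this; exact absurd this h0
  · exact hp

private lemma sum_Icc_id_mul_two (a b : ℕ) :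
    (∑ x ∈ Finset.Icc a b, x) * 2 = (a + b) * (b + 1 - a) := by
  rcases le_or_gt a (b + 1) with h | h
  · obtain ⟨n, hn⟩ : ∃ n, b + 1 = a + n := ⟨b + 1 - a, by omega⟩
    rw [← Finset.Ico_add_one_right_eq_Icc, hn, Finset.sum_Ico_eq_sum_range]
    simp only [add_tsub_cancel_left]
    rw [Finset.sum_add_distrib, Finset.sum_const, Finset.card_range, smul_eq_mul]
    have hT := Finset.sum_range_id_mul_two n
    have h1 : b + 1 - a = n := by omega
    have h2 : a + b = a + a + n - 1 := by omega
    rw [h2]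
    rcases n with _ | k
    · simp
    · have hT' : (∑ i ∈ Finset.range (k+1), i) * 2 = (k+1) * k := by
        rw [hT]; simp
      have h3 : a + a + (k + 1) - 1 = a + a + k := by omega
      rw [h3]
      nlinarith [hT']
  · rw [Finset.Icc_eq_empty (by omega)]
    simp
    omega

private lemma eq_Icc_of_minmax {S : Finset ℕ} (h : S.Nonempty)
    (hmin : prun S = pmin S) : S = Finset.Icc (pmin S) (pmax S) := by
  apply Finset.Subset.antisymm
  · intro x hx
    simp only [Finset.mem_Icc]
    exact ⟨pmin_le hx, le_pmax hx⟩
  · rw [← hmin]; exact prun_subset h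

private lemma notbad1 {S : Finset ℕ} (h0 : 0 ∉ S) (h : S.Nonempty)
    (hst : pmin S ≤ pmax S + 1 - prun S) (hbad : ¬ 2 * pmin S ≤ pmax S) :
    ∃ k : ℕ, k ^ 2 = 24 * S.sum id + 1 := by
  set s := pmin S with hsdef
  set M := pmax S with hMdef
  set u := prun S with hudef
  have hs1 : 1 ≤ s := pmin_pos h0 h
  have hsM : s ≤ M := le_pmax (pmin_mem h)
  have huM : u ≤ M := prun_le_pmax h
  have hsu : s ≤ u := pmin_le_prun h
  have hrun := prun_subset h
  -- M - s + 1 ∈ S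
  have hmem : M - s + 1 ∈ S := hrun (by simp only [Finset.mem_Icc]; omega)
  have h1 : s ≤ M - s + 1 := pmin_le hmem
  have hM : M = 2 * s - 1 := by omega
  have hus : u = s := by omega
  have hS : S = Finset.Icc s M := eq_Icc_of_minmax h hus
  have hsum : (S.sum id) * 2 = (s + M) * (M + 1 - s) := by
    rw [hS]
    simpa using sum_Icc_id_mul_two s M
  obtain ⟨j, hj⟩ : ∃ j, s = j + 1 := ⟨s - 1, by omega⟩
  refine ⟨6 * j + 5, ?_⟩
  have e1 : s + M = 3 * j + 2 := by omega
  have e2 : M + 1 - s = j + 1 := by omega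
  have h2 : (S.sum id) * 2 = (3 * j + 2) * (j + 1) := by rw [hsum, e1, e2]
  nlinarith [h2]

private lemma notbad2 {S : Finset ℕ} (h0 : 0 ∉ S) (h : S.Nonempty)
    (hst : ¬ pmin S ≤ pmax S + 1 - prun S)
    (hbad : ¬ pmax S + 1 - prun S + 2 ≤ prun S) :
    ∃ k : ℕ, k ^ 2 = 24 * S.sum id + 1 := by
  set s := pmin S with hsdef
  set M := pmax S with hMdef
  set u := prun S with hudef
  have hs1 : 1 ≤ s := pmin_pos h0 h
  have hsM : s ≤ M := le_pmax (pmin_mem h)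
  have huM : u ≤ M := prun_le_pmax h
  have hsu : s ≤ u := pmin_le_prun h
  have hus : u = s := by omega
  have hM : M = 2 * u - 2 := by omega
  have hS : S = Finset.Icc s M := eq_Icc_of_minmax h hus
  have hsum : (S.sum id) * 2 = (s + M) * (M + 1 - s) := by
    rw [hS]
    simpa using sum_Icc_id_mul_two s M
  have hu2 : 2 ≤ u := by
    by_contra h2
    push_neg at h2
    have hMM : M = 0 := by omega
    have hmax := pmax_mem h
    rw [← hMdef, hMM] at hmax
    exact h0 hmax
  obtain ⟨j, hj⟩ : ∃ j, u = j + 2 := ⟨u - 2, by omega⟩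
  refine ⟨6 * j + 7, ?_⟩
  have e1 : s + M = 3 * j + 4 := by omega
  have e2 : M + 1 - s = j + 1 := by omega
  have h2 : (S.sum id) * 2 = (3 * j + 4) * (j + 1) := by rw [hsum, e1, e2]
  nlinarith [h2]
private lemma prun_eq {S : Finset ℕ} {u : ℕ} (hu1 : 1 ≤ u) (hu2 : u - 1 ≤ pmax S)
    (hsub : Finset.Icc u (pmax S) ⊆ S) (hnot : u - 1 ∉ S) : prun S = u := by
  refine le_antisymm (Nat.sInf_le hsub) ?_
  by_contra hc
  push_neg at hc
  have hne : {x : ℕ | Finset.Icc x (pmax S) ⊆ S}.Nonempty := ⟨u, hsub⟩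
  have hmem := Nat.sInf_mem hne
  have : u - 1 ∈ Finset.Icc (prun S) (pmax S) := by
    simp only [Finset.mem_Icc]; omega
  exact hnot (hmem this)

private lemma pmax_eq {S : Finset ℕ} {b : ℕ} (hb : b ∈ S) (h : ∀ x ∈ S, x ≤ b) :
    pmax S = b :=
  le_antisymm (Finset.sup_le h) (Finset.le_sup (f := id) hb)

private lemma mem_fr1 {S : Finset ℕ} {x : ℕ} :
    x ∈ fr1 S ↔ ((x ∈ S ∧ x ≠ pmin S ∧ ¬(pmax S - pmin S + 1 ≤ x ∧ x ≤ pmax S)) ∨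
      (pmax S - pmin S + 2 ≤ x ∧ x ≤ pmax S + 1)) := by
  simp only [fr1, Finset.mem_union, Finset.mem_sdiff, Finset.mem_erase, Finset.mem_Icc]
  tauto

private lemma mem_fr2 {S : Finset ℕ} {x : ℕ} :
    x ∈ fr2 S ↔ (((x ∈ S ∧ ¬(prun S ≤ x ∧ x ≤ pmax S)) ∨
      (prun S - 1 ≤ x ∧ x ≤ pmax S - 1)) ∨ x = pmax S + 1 - prun S) := by
  simp only [fr2, Finset.mem_union, Finset.mem_sdiff, Finset.mem_singleton, Finset.mem_Icc]
  all_goals tauto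

private lemma fr1_spec {S : Finset ℕ} (h0 : 0 ∉ S) (h : S.Nonempty)
    (hst : pmin S ≤ pmax S + 1 - prun S) (hok : 2 * pmin S ≤ pmax S) :
    0 ∉ fr1 S ∧ (fr1 S).sum id = S.sum id ∧ (fr1 S).card + 1 = S.card ∧
      franklin (fr1 S) = S := by
  have hs1 : 1 ≤ pmin S := pmin_pos h0 h
  have hsM : pmin S ≤ pmax S := le_pmax (pmin_mem h)
  have huM : prun S ≤ pmax S := prun_le_pmax h
  have hsu : pmin S ≤ prun S := pmin_le_prun h
  have hrun := prun_subset h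
  have hsub1 : Finset.Icc (pmax S - pmin S + 1) (pmax S) ⊆ S := by
    intro x hx
    simp only [Finset.mem_Icc] at hx
    exact hrun (by simp only [Finset.mem_Icc]; omega)
  have hsub2 : Finset.Icc (pmax S - pmin S + 1) (pmax S) ⊆ S.erase (pmin S) := by
    intro x hx
    simp only [Finset.mem_Icc] at hx
    exact Finset.mem_erase.2 ⟨by omega, hsub1 (by simp only [Finset.mem_Icc]; omega)⟩
  have hErase : (S.erase (pmin S) \ Finset.Icc (pmax S - pmin S + 1) (pmax S)) ∪
      Finset.Icc (pmax S - pmin S + 1) (pmax S) = S.erase (pmin S) :=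
    Finset.sdiff_union_of_subset hsub2
  have hd2 : Disjoint (S.erase (pmin S) \ Finset.Icc (pmax S - pmin S + 1) (pmax S))
      (Finset.Icc (pmax S - pmin S + 1) (pmax S)) := Finset.sdiff_disjoint
  have hdisj : Disjoint (S.erase (pmin S) \ Finset.Icc (pmax S - pmin S + 1) (pmax S))
      (Finset.Icc (pmax S - pmin S + 2) (pmax S + 1)) := by
    rw [Finset.disjoint_left]
    intro x hx hx2
    simp only [Finset.mem_sdiff, Finset.mem_erase, Finset.mem_Icc] at hx hx2
    have := le_pmax hx.1.2
    omega
  have hcardIcc1 : (Finset.Icc (pmax S - pmin S + 1) (pmax S)).card = pmin S := by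
    rw [Nat.card_Icc]; omega
  have hcardIcc2 : (Finset.Icc (pmax S - pmin S + 2) (pmax S + 1)).card = pmin S := by
    rw [Nat.card_Icc]; omega
  have hcS : 1 ≤ S.card := Finset.card_pos.2 h
  have hcErase : (S.erase (pmin S)).card + 1 = S.card := by
    rw [Finset.card_erase_of_mem (pmin_mem h)]; omega
  have hcL : (S.erase (pmin S)).card =
      (S.erase (pmin S) \ Finset.Icc (pmax S - pmin S + 1) (pmax S)).card + pmin S := by
    conv_lhs => rw [← hErase]
    rw [Finset.card_union_of_disjoint hd2, hcardIcc1]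
  have hcard : (fr1 S).card + 1 = S.card := by
    have : (fr1 S).card =
        (S.erase (pmin S) \ Finset.Icc (pmax S - pmin S + 1) (pmax S)).card + pmin S := by
      simp only [fr1]
      rw [Finset.card_union_of_disjoint hdisj, hcardIcc2]
    omega
  have hsErase : (S.erase (pmin S) \ Finset.Icc (pmax S - pmin S + 1) (pmax S)).sum id
      + (Finset.Icc (pmax S - pmin S + 1) (pmax S)).sum id = (S.erase (pmin S)).sum id := by
    rw [← Finset.sum_union hd2, hErase]
  have hsS : (S.erase (pmin S)).sum id + pmin S = S.sum id :=
    Finset.sum_erase_add S id (pmin_mem h)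
  have hshift : (Finset.Icc (pmax S - pmin S + 2) (pmax S + 1)).sum id
      = (Finset.Icc (pmax S - pmin S + 1) (pmax S)).sum id + pmin S := by
    have hmap : (Finset.Icc (pmax S - pmin S + 1) (pmax S)).map (addRightEmbedding 1)
        = Finset.Icc (pmax S - pmin S + 2) (pmax S + 1) := by
      rw [Finset.map_add_right_Icc]
      all_goals (congr 1 <;> omega)
    rw [← hmap, Finset.sum_map]
    simp only [addRightEmbedding_apply, id_eq]
    rw [Finset.sum_add_distrib, Finset.sum_const, Nat.card_Icc]
    simp only [smul_eq_mul, mul_one]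
    omega
  have hsum : (fr1 S).sum id = S.sum id := by
    have : (fr1 S).sum id
        = (S.erase (pmin S) \ Finset.Icc (pmax S - pmin S + 1) (pmax S)).sum id
          + (Finset.Icc (pmax S - pmin S + 2) (pmax S + 1)).sum id := by
      simp only [fr1]
      rw [Finset.sum_union hdisj]
    omega
  have h0' : 0 ∉ fr1 S := by
    intro hc
    rcases mem_fr1.1 hc with ⟨hxS, _, _⟩ | ⟨h1, _⟩
    · exact h0 hxS
    · omega
  refine ⟨h0', hsum, hcard, ?_⟩
  have hmem1 : pmax S + 1 ∈ fr1 S := mem_fr1.2 (Or.inr ⟨by omega, le_rfl⟩)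
  have hne1 : (fr1 S).Nonempty := ⟨pmax S + 1, hmem1⟩
  have hbound : ∀ x ∈ fr1 S, x ≤ pmax S + 1 := by
    intro x hx
    rcases mem_fr1.1 hx with ⟨hxS, _, _⟩ | ⟨_, h2⟩
    · have := le_pmax hxS; omega
    · omega
  have hM1 : pmax (fr1 S) = pmax S + 1 := pmax_eq hmem1 hbound
  have hgt : ∀ x ∈ fr1 S, pmin S + 1 ≤ x := by
    intro x hx
    rcases mem_fr1.1 hx with ⟨hxS, hne', _⟩ | ⟨h1, _⟩
    · have := pmin_le hxS
      rcases Nat.lt_or_ge (pmin S) x with h' | h'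
      · omega
      · exact absurd (le_antisymm h' this) hne'
    · omega
  have hmin1 : pmin S + 1 ≤ pmin (fr1 S) := hgt _ (pmin_mem hne1)
  have hnotm : pmax S - pmin S + 1 ∉ fr1 S := by
    intro hc
    rcases mem_fr1.1 hc with ⟨_, _, h3⟩ | ⟨h4, _⟩
    · omega
    · omega
  have hu1 : prun (fr1 S) = pmax S - pmin S + 2 := by
    apply prun_eq (by omega) (by rw [hM1]; omega)
    · rw [hM1]
      intro x hx
      simp only [Finset.mem_Icc] at hx
      exact mem_fr1.2 (Or.inr (by omega))
    · have e : pmax S - pmin S + 2 - 1 = pmax S - pmin S + 1 := by omega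
      rw [e]
      exact hnotm
  simp only [franklin, fr2, hM1, hu1]
  have e0 : pmax S + 1 + 1 - (pmax S - pmin S + 2) = pmin S := by omega
  have e1 : pmax S - pmin S + 2 - 1 = pmax S - pmin S + 1 := by omega
  have e2 : pmax S + 1 - 1 = pmax S := by omega
  rw [e0, e1, e2, if_neg (by omega)]
  ext x
  simp only [Finset.mem_union, Finset.mem_sdiff, Finset.mem_singleton, Finset.mem_Icc]
  constructor
  · rintro ((⟨hx1, hnot⟩ | ⟨h1, h2⟩) | rfl)
    · rcases mem_fr1.1 hx1 with ⟨hxS, _, _⟩ | ⟨h1, h2⟩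
      · exact hxS
      · omega
    · exact hsub1 (by simp only [Finset.mem_Icc]; omega)
    · exact pmin_mem h
  · intro hxS
    by_cases hxs : x = pmin S
    · right; exact hxs
    · have hxles : pmin S ≤ x := pmin_le hxS
      have hxleM : x ≤ pmax S := le_pmax hxS
      by_cases hge : pmax S - pmin S + 1 ≤ x
      · left; right; exact ⟨hge, hxleM⟩
      · left; left
        exact ⟨mem_fr1.2 (Or.inl ⟨hxS, hxs, by omega⟩), by omega⟩
private lemma pmin_eq {S : Finset ℕ} {a : ℕ} (ha : a ∈ S) (h : ∀ x ∈ S, a ≤ x) :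
    pmin S = a :=
  le_antisymm (Nat.sInf_le (by exact_mod_cast ha)) (h _ (pmin_mem ⟨a, ha⟩))

private lemma fr2_spec {S : Finset ℕ} (h0 : 0 ∉ S) (h : S.Nonempty)
    (hst : ¬ pmin S ≤ pmax S + 1 - prun S)
    (hok : pmax S + 1 - prun S + 2 ≤ prun S) :
    0 ∉ fr2 S ∧ (fr2 S).sum id = S.sum id ∧ (fr2 S).card = S.card + 1 ∧
      franklin (fr2 S) = S := by
  have hs1 : 1 ≤ pmin S := pmin_pos h0 h
  have hsM : pmin S ≤ pmax S := le_pmax (pmin_mem h)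
  have huM : prun S ≤ pmax S := prun_le_pmax h
  have hsu : pmin S ≤ prun S := pmin_le_prun h
  have hu1 : 1 ≤ prun S := prun_pos h0 h
  have hnotu : prun S - 1 ∉ S := prun_pred_not_mem h0 h
  have hrun := prun_subset h
  have hts : pmax S + 1 - prun S < pmin S := by omega
  have hsmall : ∀ x ∈ S, ¬(prun S ≤ x ∧ x ≤ pmax S) → x ≤ prun S - 2 := by
    intro x hx hnot
    have h1 := le_pmax hx
    have h2 : x ≠ prun S - 1 := fun he => hnotu (he ▸ hx)
    omega
  have hdLI : Disjoint (S \ Finset.Icc (prun S) (pmax S))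
      (Finset.Icc (prun S - 1) (pmax S - 1)) := by
    rw [Finset.disjoint_left]
    intro x hx hx2
    simp only [Finset.mem_sdiff, Finset.mem_Icc] at hx hx2
    have := hsmall x hx.1 hx.2
    omega
  have hdT : Disjoint ((S \ Finset.Icc (prun S) (pmax S)) ∪
      Finset.Icc (prun S - 1) (pmax S - 1)) {pmax S + 1 - prun S} := by
    rw [Finset.disjoint_right]
    intro x hx hx2
    simp only [Finset.mem_singleton] at hx
    subst hx
    rcases Finset.mem_union.1 hx2 with h1 | h1
    · simp only [Finset.mem_sdiff] at h1
      have := pmin_le h1.1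
      omega
    · simp only [Finset.mem_Icc] at h1
      omega
  have hdecomp : (S \ Finset.Icc (prun S) (pmax S)) ∪ Finset.Icc (prun S) (pmax S) = S :=
    Finset.sdiff_union_of_subset hrun
  have hdS : Disjoint (S \ Finset.Icc (prun S) (pmax S)) (Finset.Icc (prun S) (pmax S)) :=
    Finset.sdiff_disjoint
  have hcIcc : (Finset.Icc (prun S) (pmax S)).card = pmax S + 1 - prun S := by
    rw [Nat.card_Icc]
  have hcI' : (Finset.Icc (prun S - 1) (pmax S - 1)).card = pmax S + 1 - prun S := by
    rw [Nat.card_Icc]; omega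
  have hcS : S.card = (S \ Finset.Icc (prun S) (pmax S)).card + (pmax S + 1 - prun S) := by
    conv_lhs => rw [← hdecomp]
    rw [Finset.card_union_of_disjoint hdS, hcIcc]
  have hcard : (fr2 S).card = S.card + 1 := by
    have : (fr2 S).card = (S \ Finset.Icc (prun S) (pmax S)).card
        + (pmax S + 1 - prun S) + 1 := by
      simp only [fr2]
      rw [Finset.card_union_of_disjoint hdT, Finset.card_union_of_disjoint hdLI,
        Finset.card_singleton, hcI']
    omega
  have hsumS : (S \ Finset.Icc (prun S) (pmax S)).sum id
      + (Finset.Icc (prun S) (pmax S)).sum id = S.sum id := by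
    rw [← Finset.sum_union hdS, hdecomp]
  have hshift : (Finset.Icc (prun S) (pmax S)).sum id
      = (Finset.Icc (prun S - 1) (pmax S - 1)).sum id + (pmax S + 1 - prun S) := by
    have hmap : (Finset.Icc (prun S - 1) (pmax S - 1)).map (addRightEmbedding 1)
        = Finset.Icc (prun S) (pmax S) := by
      rw [Finset.map_add_right_Icc]
      all_goals (congr 1 <;> omega)
    rw [← hmap, Finset.sum_map]
    simp only [addRightEmbedding_apply, id_eq]
    rw [Finset.sum_add_distrib, Finset.sum_const, Nat.card_Icc]
    simp only [smul_eq_mul, mul_one]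
    omega
  have hsum : (fr2 S).sum id = S.sum id := by
    have : (fr2 S).sum id = ((S \ Finset.Icc (prun S) (pmax S)).sum id
        + (Finset.Icc (prun S - 1) (pmax S - 1)).sum id) + (pmax S + 1 - prun S) := by
      simp only [fr2]
      rw [Finset.sum_union hdT, Finset.sum_union hdLI, Finset.sum_singleton]
      simp only [id_eq]
    omega
  have h0' : 0 ∉ fr2 S := by
    intro hc
    rcases mem_fr2.1 hc with (⟨hxS, _⟩ | ⟨h1, _⟩) | h2
    · exact h0 hxS
    · omega
    · omega
  refine ⟨h0', hsum, hcard, ?_⟩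
  have hmemM : pmax S - 1 ∈ fr2 S := mem_fr2.2 (Or.inl (Or.inr ⟨by omega, le_rfl⟩))
  have hbound : ∀ x ∈ fr2 S, x ≤ pmax S - 1 := by
    intro x hx
    rcases mem_fr2.1 hx with (⟨hxS, hn⟩ | ⟨_, h2⟩) | h2
    · have := hsmall x hxS hn
      omega
    · omega
    · omega
  have hM2 : pmax (fr2 S) = pmax S - 1 := pmax_eq hmemM hbound
  have hmemt : pmax S + 1 - prun S ∈ fr2 S := mem_fr2.2 (Or.inr rfl)
  have hmint : pmin (fr2 S) = pmax S + 1 - prun S := by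
    apply pmin_eq hmemt
    intro x hx
    rcases mem_fr2.1 hx with (⟨hxS, _⟩ | ⟨h1, _⟩) | h2
    · have := pmin_le hxS
      omega
    · omega
    · omega
  have hu2le : prun (fr2 S) ≤ prun S - 1 := by
    apply Nat.sInf_le
    rw [Set.mem_setOf_eq, hM2]
    intro x hx
    simp only [Finset.mem_Icc] at hx
    exact mem_fr2.2 (Or.inl (Or.inr hx))
  simp only [franklin, fr1, hmint, hM2]
  rw [if_pos (by omega)]
  have e1 : pmax S - 1 - (pmax S + 1 - prun S) + 1 = prun S - 1 := by omega
  have e2 : pmax S - 1 - (pmax S + 1 - prun S) + 2 = prun S := by omega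
  have e3 : pmax S - 1 + 1 = pmax S := by omega
  rw [e1, e2, e3]
  ext x
  simp only [Finset.mem_union, Finset.mem_sdiff, Finset.mem_erase, Finset.mem_Icc]
  constructor
  · rintro (⟨⟨hxt, hx2⟩, hnot⟩ | ⟨h1, h2⟩)
    · rcases mem_fr2.1 hx2 with (⟨hxS, _⟩ | ⟨h3, h4⟩) | h5
      · exact hxS
      · omega
      · exact absurd h5 hxt
    · exact hrun (by simp only [Finset.mem_Icc]; exact ⟨h1, h2⟩)
  · intro hxS
    by_cases hin : prun S ≤ x
    · right; exact ⟨hin, le_pmax hxS⟩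
    · left
      have hx2 : x ≤ prun S - 2 := hsmall x hxS (by omega)
      have := pmin_le hxS
      refine ⟨⟨by omega, mem_fr2.2 (Or.inl (Or.inl ⟨hxS, by omega⟩))⟩, by omega⟩
private lemma franklin_spec {S : Finset ℕ} (h0 : 0 ∉ S) (h : S.Nonempty)
    (hp : ∀ k : ℕ, k ^ 2 ≠ 24 * S.sum id + 1) :
    0 ∉ franklin S ∧ (franklin S).sum id = S.sum id ∧
      ((franklin S).card + 1 = S.card ∨ (franklin S).card = S.card + 1) ∧
      franklin (franklin S) = S := by
  by_cases hst : pmin S ≤ pmax S + 1 - prun S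
  · have hok : 2 * pmin S ≤ pmax S := by
      by_contra hbad
      obtain ⟨k, hk⟩ := notbad1 h0 h hst hbad
      exact hp k hk
    obtain ⟨a, b, c, d⟩ := fr1_spec h0 h hst hok
    rw [franklin, if_pos hst]
    exact ⟨a, b, Or.inl c, d⟩
  · have hok : pmax S + 1 - prun S + 2 ≤ prun S := by
      by_contra hbad
      obtain ⟨k, hk⟩ := notbad2 h0 h hst hbad
      exact hp k hk
    obtain ⟨a, b, c, d⟩ := fr2_spec h0 h hst hok
    rw [franklin, if_neg hst]
    exact ⟨a, b, Or.inr c, d⟩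

open scoped Classical in
private noncomputable def Wset (m : ℕ) (q : ℕ → Prop) : Finset (Finset ℕ) :=
  (Finset.range (m+1)).powerset.filter (fun S => 0 ∉ S ∧ S.sum id = m ∧ q S.card)

private lemma mem_Wset {m : ℕ} {q : ℕ → Prop} {S : Finset ℕ} :
    S ∈ Wset m q ↔ 0 ∉ S ∧ S.sum id = m ∧ q S.card := by
  classical
  constructor
  · intro hS
    have := Finset.mem_filter.1 hS
    convert this.2 using 1
  · intro hS
    refine Finset.mem_filter.2 ⟨Finset.mem_powerset.2 ?_, by convert hS using 1⟩
    intro x hx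
    have : x ≤ S.sum id := Finset.single_le_sum (f := id) (fun i _ => Nat.zero_le i) hx
    rw [hS.2.1] at this
    exact Finset.mem_range.2 (by omega)

private lemma card_le_sum' {S : Finset ℕ} (h0 : 0 ∉ S) : S.card ≤ S.sum id := by
  have := Finset.card_nsmul_le_sum S id 1 (fun x hx => by
    rcases Nat.eq_zero_or_pos x with he | hp
    · exact absurd (he ▸ hx) h0
    · exact hp)
  simpa using this

private lemma basic_Wset {m : ℕ} (hm : m ≠ 0) {q : ℕ → Prop} {S : Finset ℕ}
    (hS : S ∈ Wset m q) : 0 ∉ S ∧ S.sum id = m ∧ S.Nonempty ∧ S.card ≤ m := by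
  obtain ⟨h0, hsum, _⟩ := mem_Wset.1 hS
  have hne : S.Nonempty := by
    rcases S.eq_empty_or_nonempty with rfl | h
    · simp at hsum; exact absurd hsum.symm hm
    · exact h
  have := card_le_sum' h0
  exact ⟨h0, hsum, hne, by omega⟩

private lemma Wset_card_eq (m : ℕ) (hm : m ≠ 0) (hp : ∀ k : ℕ, k ^ 2 ≠ 24 * m + 1) :
    (Wset m (fun c => Even (m - c))).card = (Wset m (fun c => ¬ Even (m - c))).card := by
  have hp' : ∀ S : Finset ℕ, S.sum id = m → ∀ k : ℕ, k ^ 2 ≠ 24 * S.sum id + 1 := by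
    intro S hS k
    rw [hS]
    exact hp k
  have move : ∀ (S : Finset ℕ) (q q' : ℕ → Prop), S ∈ Wset m q →
      (∀ h0 : 0 ∉ S, ∀ hsum : S.sum id = m, q' (franklin S).card) →
      franklin S ∈ Wset m q' := by
    intro S q q' hS hq'
    obtain ⟨h0, hsum, hne, _⟩ := basic_Wset hm hS
    obtain ⟨a, b, _, _⟩ := franklin_spec h0 hne (hp' S hsum)
    exact mem_Wset.2 ⟨a, by rw [b, hsum], hq' h0 hsum⟩
  apply Finset.card_bij (fun S _ => franklin S)
  · intro S hS
    obtain ⟨h0, hsum, hne, hcle⟩ := basic_Wset hm hS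
    obtain ⟨a, b, c, d⟩ := franklin_spec h0 hne (hp' S hsum)
    have hc2 : (franklin S).card ≤ m := by
      have := card_le_sum' a
      rw [b, hsum] at this
      exact this
    have hq := (mem_Wset.1 hS).2.2
    refine move S _ _ hS (fun _ _ => ?_)
    rw [Nat.even_iff] at hq ⊢
    omega
  · intro S₁ hS₁ S₂ hS₂ heq
    obtain ⟨h01, hsum1, hne1, _⟩ := basic_Wset hm hS₁
    obtain ⟨h02, hsum2, hne2, _⟩ := basic_Wset hm hS₂
    have d1 := (franklin_spec h01 hne1 (hp' S₁ hsum1)).2.2.2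
    have d2 := (franklin_spec h02 hne2 (hp' S₂ hsum2)).2.2.2
    rw [← d1, ← d2, heq]
  · intro T hT
    obtain ⟨h0, hsum, hne, hcle⟩ := basic_Wset hm hT
    obtain ⟨a, b, c, d⟩ := franklin_spec h0 hne (hp' T hsum)
    have hc2 : (franklin T).card ≤ m := by
      have := card_le_sum' a
      rw [b, hsum] at this
      exact this
    have hq := (mem_Wset.1 hT).2.2
    refine ⟨franklin T, ?_, d⟩
    refine move T _ _ hT (fun _ _ => ?_)
    rw [Nat.even_iff] at hq ⊢
    omega
open scoped Classical in
private lemma distincts_card_eq (m : ℕ) (q : ℕ → Prop) :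
    ((Nat.Partition.distincts m).filter (fun l => q l.parts.card)).card
      = (Wset m (fun c => q c)).card := by
  apply Finset.card_bij (fun l _ => l.parts.toFinset)
  · intro l hl
    have hl' := Finset.mem_filter.1 hl
    have hnd : l.parts.Nodup := (Finset.mem_filter.1 hl'.1).2
    have hfin : l.parts.toFinset = ⟨l.parts, hnd⟩ := (Multiset.toFinset_eq hnd).symm
    refine mem_Wset.2 ?_
    rw [hfin]
    refine ⟨?_, ?_, ?_⟩
    · intro hc
      have := l.parts_pos (by exact_mod_cast hc)
      omega
    · show (Multiset.map id l.parts).sum = m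
      rw [Multiset.map_id]
      exact l.parts_sum
    · show q (Multiset.card l.parts)
      exact hl'.2
  · intro l₁ h₁ l₂ h₂ heq
    have hnd1 : l₁.parts.Nodup := (Finset.mem_filter.1 (Finset.mem_filter.1 h₁).1).2
    have hnd2 : l₂.parts.Nodup := (Finset.mem_filter.1 (Finset.mem_filter.1 h₂).1).2
    apply Nat.Partition.ext
    have e1 : l₁.parts.toFinset = ⟨l₁.parts, hnd1⟩ := (Multiset.toFinset_eq hnd1).symm
    have e2 : l₂.parts.toFinset = ⟨l₂.parts, hnd2⟩ := (Multiset.toFinset_eq hnd2).symm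
    rw [e1, e2] at heq
    exact_mod_cast congrArg Finset.val heq
  · intro T hT
    obtain ⟨h0, hsum, hq⟩ := mem_Wset.1 hT
    refine ⟨⟨T.val, ?_, ?_⟩, ?_, ?_⟩
    · intro i hi
      rcases Nat.eq_zero_or_pos i with rfl | hp
      · exact absurd hi h0
      · exact hp
    · show T.val.sum = m
      rw [← hsum]
      show T.val.sum = (Multiset.map id T.val).sum
      rw [Multiset.map_id]
    · refine Finset.mem_filter.2 ⟨Finset.mem_filter.2 ⟨Finset.mem_univ _, T.nodup⟩, ?_⟩
      show q (Multiset.card T.val)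
      exact hq
    · show T.val.toFinset = T
      exact Finset.val_toFinset T
private lemma filter_parity_eq (m : ℕ) (hm : m ≠ 0) (hp : ∀ k : ℕ, k ^ 2 ≠ 24 * m + 1) :
    ((Nat.Partition.distincts m).filter (fun l => Even (m - l.parts.card))).card
      = ((Nat.Partition.distincts m).filter (fun l => ¬ Even (m - l.parts.card))).card := by
  have h1 := distincts_card_eq m (fun c => Even (m - c))
  have h2 := distincts_card_eq m (fun c => ¬ Even (m - c))
  convert h1.trans ((Wset_card_eq m hm hp).trans h2.symm) using 3

theorem spchar_hatS_mod3_family (p : ℕ) (hp : p.Prime) (hp5 : 5 ≤ p)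
    (r : ℕ) (hr1 : 1 ≤ r) (hr2 : r ≤ p - 1)
    (hnr : ¬ ∃ x : ZMod p, x ^ 2 = ((24 * r + 1 : ℕ) : ZMod p)) (n : ℕ) :
    fShat (p * n + r) % 3 = 0 := by
  have hm : p * n + r ≠ 0 := by omega
  have hpent : ∀ k : ℕ, k ^ 2 ≠ 24 * (p * n + r) + 1 := by
    intro k hk
    apply hnr
    refine ⟨(k : ZMod p), ?_⟩
    have h2 : ((24 * (p * n + r) + 1 : ℕ) : ZMod p) = ((24 * r + 1 : ℕ) : ZMod p) := by
      push_cast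
      rw [ZMod.natCast_self]
      ring
    calc (k : ZMod p) ^ 2 = ((k ^ 2 : ℕ) : ZMod p) := by push_cast; ring
      _ = ((24 * (p * n + r) + 1 : ℕ) : ZMod p) := by rw [hk]
      _ = ((24 * r + 1 : ℕ) : ZMod p) := h2
  have key := filter_parity_eq (p * n + r) hm hpent
  simp only [fShat]
  omega
end

section
/- As formal power series in q with integer coefficients, (q²;q²)_∞³ / ((q;q)_∞ (q⁴;q⁴)_∞) = ∑_{n=−∞}^{∞} (−1)^{(3n²+7n)/2} q^{n(3n+1)/2}. -/
open scoped Classical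

/-- The formal power series ∏_{n≥1} (1 - q^(c·n)), i.e. (q^c; q^c)_∞.
The d-th coefficient of the infinite product agrees with that of the partial product
over the first d+1 factors, since all later factors are 1 + O(q^(d+1)). -/
noncomputable def euler (c : ℕ) : PowerSeries ℤ :=
  PowerSeries.mk fun d =>
    PowerSeries.coeff d
      (∏ n ∈ Finset.range (d + 1), (1 - (PowerSeries.X : PowerSeries ℤ) ^ (c * (n + 1))))

/-- The multiplicative inverse of (q^c; q^c)_∞ (its constant coefficient is 1). -/
noncomputable def eulerInv (c : ℕ) : PowerSeries ℤ := (euler c).invOfUnit 1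

/-- The series ∑_{n∈ℤ} (−1)^((3n²+7n)/2) q^(n(3n+1)/2); all integer solutions n of
n(3n+1)/2 = d satisfy |n| ≤ 2d+1, so the inner sum captures them all. -/
noncomputable def pentSignSum : PowerSeries ℤ :=
  PowerSeries.mk fun d =>
    ∑ k ∈ Finset.Icc (-(2 * (d : ℤ) + 1)) (2 * (d : ℤ) + 1),
      if k * (3 * k + 1) = 2 * (d : ℤ)
      then (((-1 : ℤˣ) ^ ((3 * k ^ 2 + 7 * k) / 2) : ℤˣ) : ℤ) else 0


open PowerSeries Finset

abbrev PS := PowerSeries ℤ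

/-- truncated equality: coefficients below N agree -/
def TEq (N : ℕ) (f g : PS) : Prop := ∀ d < N, PowerSeries.coeff d f = PowerSeries.coeff d g

lemma TEq.mul {N : ℕ} {f g f' g' : PS} (h1 : TEq N f f') (h2 : TEq N g g') :
    TEq N (f * g) (f' * g') := by
  intro d hd
  rw [PowerSeries.coeff_mul, PowerSeries.coeff_mul]
  refine Finset.sum_congr rfl fun p hp => ?_
  rw [Finset.HasAntidiagonal.mem_antidiagonal] at hp
  rw [h1 p.1 (lt_of_le_of_lt (by omega) hd), h2 p.2 (lt_of_le_of_lt (by omega) hd)]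

lemma coeff_prod_stable (c d : ℕ) (hc : 1 ≤ c) {m : ℕ} (hm : d + 1 ≤ m) :
    PowerSeries.coeff d (∏ n ∈ Finset.range m, (1 - (PowerSeries.X : PS) ^ (c * (n + 1)))) =
    PowerSeries.coeff d (∏ n ∈ Finset.range (d + 1), (1 - (PowerSeries.X : PS) ^ (c * (n + 1)))) := by
  induction m with
  | zero => omega
  | succ m ih =>
    rcases Nat.lt_or_ge (d + 1) (m + 1) with h | h
    · have hdm : d + 1 ≤ m := by omega
      rw [Finset.prod_range_succ, mul_sub, mul_one, map_sub,
        PowerSeries.coeff_mul_X_pow', if_neg (by push_neg; calc d < d + 1 := by omega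
          _ ≤ m := hdm
          _ ≤ c * (m+1) := by nlinarith), sub_zero, ih hdm]
    · have : m = d := by omega
      subst this; rfl

lemma teq_euler (c d : ℕ) (hc : 1 ≤ c) {m : ℕ} (hm : d + 1 ≤ m) :
    PowerSeries.coeff d
      (PowerSeries.mk fun d =>
        PowerSeries.coeff d (∏ n ∈ Finset.range (d + 1), (1 - (PowerSeries.X : PS) ^ (c * (n + 1))))) =
    PowerSeries.coeff d (∏ n ∈ Finset.range m, (1 - (PowerSeries.X : PS) ^ (c * (n + 1)))) := by
  rw [PowerSeries.coeff_mk, coeff_prod_stable c d hc hm]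

/-- the exact finite rearrangement identity -/
lemma finite_rearrange (M : ℕ) :
    (∏ n ∈ Finset.range (2*M), (1 - (-PowerSeries.X : PS) ^ (n + 1))) *
      (∏ n ∈ Finset.range (2*M), (1 - (PowerSeries.X : PS) ^ (n + 1))) *
      (∏ n ∈ Finset.range M, (1 - (PowerSeries.X : PS) ^ (4 * (n + 1)))) =
    (∏ n ∈ Finset.range (2*M), (1 - (PowerSeries.X : PS) ^ (2 * (n + 1)))) *
      (∏ n ∈ Finset.range M, (1 - (PowerSeries.X : PS) ^ (2 * (n + 1)))) ^ 2 := by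
  induction M with
  | zero => simp
  | succ M ih =>
    have h2 : 2 * (M + 1) = (2 * M) + 1 + 1 := by ring
    rw [h2, Finset.prod_range_succ, Finset.prod_range_succ, Finset.prod_range_succ (f := fun n => (1 - (PowerSeries.X : PS) ^ (n+1))), Finset.prod_range_succ (f := fun n => (1 - (PowerSeries.X : PS) ^ (n+1))), Finset.prod_range_succ, Finset.prod_range_succ, Finset.prod_range_succ (f := fun n => (1 - (PowerSeries.X : PS) ^ (2*(n+1)))), Finset.prod_range_succ (f := fun n => (1 - (PowerSeries.X : PS) ^ (2*(n+1))))]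
    have hodd : (-PowerSeries.X : PS) ^ (2*M + 1) = -(PowerSeries.X : PS) ^ (2*M+1) :=
      Odd.neg_pow ⟨M, by ring⟩ _
    have heven : (-PowerSeries.X : PS) ^ (2*M + 1 + 1) = (PowerSeries.X : PS) ^ (2*M+1+1) :=
      Even.neg_pow ⟨M+1, by ring⟩ _
    rw [hodd, heven]
    linear_combination ((1 - (PowerSeries.X:PS)^(2*(2*M+1))) * (1 - (PowerSeries.X:PS)^(2*(2*M+1+1))) * (1 - (PowerSeries.X:PS)^(2*(M+1)))^2) * ih

open PowerSeries Finset


def tri (i : ℕ) : ℕ := i * (i + 1) / 2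
def g1 (j : ℕ) : ℕ := (3 * j * j + j) / 2
def g2 (j : ℕ) : ℕ := g1 j - j

lemma two_tri (i : ℕ) : 2 * tri i = i * (i + 1) :=
  Nat.mul_div_cancel' (Nat.even_mul_succ_self i).two_dvd

lemma two_g1 (j : ℕ) : 2 * g1 j = 3 * j * j + j := by
  apply Nat.mul_div_cancel'
  rcases Nat.even_or_odd j with ⟨t, ht⟩ | ⟨t, ht⟩
  · exact ⟨t * (3 * j + 1), by subst ht; ring⟩
  · exact ⟨j * (3 * t + 2), by subst ht; ring⟩

lemma g1_ge (j : ℕ) : j ≤ g1 j := by have := two_g1 j; nlinarith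

lemma two_g2 (j : ℕ) : 2 * g2 j + j = 3 * j * j := by
  have h1 := two_g1 j; have h2 := g1_ge j
  simp only [g2]; omega

lemma g2_ge (j : ℕ) : j ≤ g2 j := by have := two_g2 j; nlinarith

lemma E1 (n i : ℕ) : n * (i+1) + tri (i+1) = (n * i + tri i) + (i + (n + 1)) := by
  apply Nat.eq_of_mul_eq_mul_left (show 0 < 2 by norm_num)
  have h1 := two_tri i; have h2 := two_tri (i+1)
  zify at h1 h2 ⊢; linear_combination h2 - h1

lemma E3 (n : ℕ) : n * (n+1) + tri (n+1) = g2 (n+1) := by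
  apply Nat.eq_of_mul_eq_mul_left (show 0 < 2 by norm_num)
  have h1 := two_tri (n+1); have h2 := two_g2 (n+1)
  zify at h1 h2 ⊢; linear_combination h1 - h2

lemma E4 (n : ℕ) : (n+1) * (n+1) + tri (n+1) = g1 (n+1) := by
  apply Nat.eq_of_mul_eq_mul_left (show 0 < 2 by norm_num)
  have h1 := two_tri (n+1); have h2 := two_g1 (n+1)
  zify at h1 h2 ⊢; linear_combination h1 - h2

/-- (q;q)_n / (q;q)_i as the product over j ∈ [i, n) of (1 - q^(j+1)) -/
noncomputable def ratio (n i : ℕ) : PS := ∏ j ∈ Finset.Ico i n, (1 - (PowerSeries.X : PS) ^ (j + 1))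

noncomputable def AA (n i : ℕ) : PS := ratio n i * (PowerSeries.X : PS) ^ (n * i + tri i)

noncomputable def DD (n : ℕ) : ℕ → PS
  | 0 => 0
  | (i+1) => ratio n i * (PowerSeries.X : PS) ^ (n * (i+1) + tri (i+1))

noncomputable def TT (n : ℕ) : PS :=
  ∑ i ∈ Finset.range (n + 1), PowerSeries.C (R := ℤ) ((-1)^i) * AA n i

noncomputable def pterm : ℕ → PS
  | 0 => 1
  | (j+1) => PowerSeries.C (R := ℤ) ((-1)^(j+1)) *
      ((PowerSeries.X : PS) ^ (g1 (j+1)) + (PowerSeries.X : PS) ^ (g2 (j+1)))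

noncomputable def Pfin (n : ℕ) : PS := ∑ j ∈ Finset.range (n + 1), pterm j

lemma ratio_succ_top {n i : ℕ} (h : i ≤ n) :
    ratio (n+1) i = ratio n i * (1 - (PowerSeries.X : PS) ^ (n + 1)) := by
  rw [ratio, ratio, Finset.prod_Ico_succ_top (by omega)]

lemma ratio_bot {n i : ℕ} (h : i < n) :
    ratio n i = (1 - (PowerSeries.X : PS) ^ (i + 1)) * ratio n (i+1) := by
  rw [ratio, ratio, Finset.prod_eq_prod_Ico_succ_bot h]

lemma ratio_self (n : ℕ) : ratio n n = 1 := by simp [ratio]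

/-- the key rearrangement: B i = A i - D i - D (i+1) for i ≤ n -/
lemma key1 {n i : ℕ} (h : i ≤ n) :
    AA (n+1) i = AA n i - DD n i - DD n (i+1) := by
  cases i with
  | zero =>
    simp only [AA, DD, ratio_succ_top (Nat.zero_le n)]
    have h0 : (n+1) * 0 + tri 0 = 0 := by simp [tri]
    have h0' : n * 0 + tri 0 = 0 := by simp [tri]
    have h1 : n * (0+1) + tri (0+1) = n + 1 := by simp [tri]
    rw [h0, h0', h1, pow_zero]
    ring
  | succ j =>
    have hj : j < n := by omega
    simp only [AA]
    rw [ratio_succ_top h, DD, DD, ratio_bot (show j < n by omega)]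
    have e1 : n * (j+1+1) + tri (j+1+1) = (n * (j+1) + tri (j+1)) + ((j+1) + (n+1)) := E1 n (j+1)
    have e2 : (n+1) * (j+1) + tri (j+1) = (n * (j+1) + tri (j+1)) + (j+1) := by ring
    rw [e1, e2, pow_add, pow_add, pow_add]
    ring

lemma telescope (f : ℕ → PS) (h0 : f 0 = 0) (n : ℕ) :
    ∑ i ∈ Finset.range (n+1), PowerSeries.C (R := ℤ) ((-1)^i) * (f i + f (i+1))
      = PowerSeries.C (R := ℤ) ((-1)^n) * f (n+1) := by
  induction n with
  | zero => simp [h0]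
  | succ n ih =>
    rw [Finset.sum_range_succ, ih]
    have : ((-1:ℤ))^(n+1) = -(-1:ℤ)^n := by ring
    rw [this]
    simp only [map_neg]
    ring

lemma shanks (n : ℕ) : TT n = Pfin n := by
  induction n with
  | zero =>
    simp [TT, Pfin, AA, pterm, ratio_self, tri]
  | succ n ih =>
    rw [TT, Finset.sum_range_succ]
    have hlast : PowerSeries.C (R := ℤ) ((-1)^(n+1)) * AA (n+1) (n+1)
        = PowerSeries.C (R := ℤ) ((-1)^(n+1)) * (PowerSeries.X : PS) ^ (g1 (n+1)) := by
      simp only [AA]; rw [ratio_self, E4, one_mul]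
    have hsum : ∑ i ∈ Finset.range (n+1), PowerSeries.C (R := ℤ) ((-1)^i) * AA (n+1) i
        = TT n - PowerSeries.C (R := ℤ) ((-1)^n) * DD n (n+1) := by
      have hcong : ∀ i ∈ Finset.range (n+1),
          PowerSeries.C (R := ℤ) ((-1)^i) * AA (n+1) i
            = PowerSeries.C (R := ℤ) ((-1)^i) * AA n i
              - PowerSeries.C (R := ℤ) ((-1)^i) * (DD n i + DD n (i+1)) := by
        intro i hi
        rw [Finset.mem_range] at hi
        rw [key1 (n := n) (i := i) (by omega)]
        ring
      rw [Finset.sum_congr rfl hcong, Finset.sum_sub_distrib,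
        telescope (DD n) rfl n, ← TT]
    rw [hsum, hlast]
    have hDD : DD n (n+1) = (PowerSeries.X : PS) ^ (g2 (n+1)) := by
      rw [DD, ratio_self, E3, one_mul]
    rw [hDD, Pfin, Finset.sum_range_succ, ← Pfin, ih, pterm]
    have : ((-1:ℤ))^(n+1) = -(-1:ℤ)^n := by ring
    rw [this]
    simp only [map_neg]
    ring

----PART3----

lemma constCoeff_euler (c : ℕ) (hc : 1 ≤ c) : PowerSeries.constantCoeff (R := ℤ) (euler c) = 1 := by
  rw [← PowerSeries.coeff_zero_eq_constantCoeff, euler, PowerSeries.coeff_mk,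
    Finset.prod_range_one, map_sub, PowerSeries.coeff_one, PowerSeries.coeff_X_pow,
    if_pos rfl, if_neg (by omega)]
  ring

lemma euler_mul_inv (c : ℕ) (hc : 1 ≤ c) : euler c * eulerInv c = 1 := by
  refine PowerSeries.mul_invOfUnit _ _ ?_
  rw [constCoeff_euler c hc]; rfl

lemma coeff_TT {d n : ℕ} (h : d + 1 ≤ n) :
    PowerSeries.coeff d (TT n) = PowerSeries.coeff d (ratio n 0) := by
  rw [TT, map_sum, Finset.sum_eq_single_of_mem 0 (by simp)]
  · have h0 : n * 0 + tri 0 = 0 := by simp [tri]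
    simp only [AA, h0, pow_zero, pow_zero, mul_one, map_one, one_mul]
  · intro i hi hne
    obtain ⟨j, rfl⟩ : ∃ j, i = j + 1 := ⟨i - 1, by omega⟩
    simp only [AA]
    rw [PowerSeries.coeff_C_mul, PowerSeries.coeff_mul_X_pow', if_neg, mul_zero]
    push_neg
    calc d < n := by omega
      _ ≤ n * (j+1) := Nat.le_mul_of_pos_right n (by omega)
      _ ≤ n * (j+1) + tri (j+1) := Nat.le_add_right _ _

lemma coeff_euler_one (d : ℕ) :
    PowerSeries.coeff d (euler 1) = PowerSeries.coeff d (Pfin (d + 1)) := by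
  rw [euler, PowerSeries.coeff_mk, ← shanks, coeff_TT (le_refl (d+1)), ratio,
    ← Finset.range_eq_Ico]
  simp only [one_mul]

lemma coeff_Pfin (d n : ℕ) :
    PowerSeries.coeff d (Pfin n) =
      (∑ j ∈ Finset.range n, (-1:ℤ)^(j+1) *
        ((if d = g1 (j+1) then 1 else 0) + (if d = g2 (j+1) then 1 else 0)))
      + (if d = 0 then 1 else 0) := by
  rw [Pfin, map_sum, Finset.sum_range_succ']
  congr 1
  · refine Finset.sum_congr rfl fun j _ => ?_
    rw [pterm, PowerSeries.coeff_C_mul, map_add, PowerSeries.coeff_X_pow,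
      PowerSeries.coeff_X_pow]
  · rw [pterm]
    exact PowerSeries.coeff_one d

lemma pos_part (d : ℕ) :
    (∑ k ∈ Finset.Icc (0:ℤ) (2*(d:ℤ)+1),
        if k*(3*k+1) = 2*(d:ℤ) then ((Int.negOnePow k : ℤ)) else 0)
      = ∑ j ∈ Finset.range (2*d+2), (if d = g1 j then ((-1:ℤ))^j else 0) := by
  refine Finset.sum_bij' (i := fun k _ => k.toNat) (j := fun j _ => (j : ℤ))
    ?_ ?_ ?_ ?_ ?_
  · intro k hk
    rw [Finset.mem_Icc] at hk
    rw [Finset.mem_range]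
    omega
  · intro j hj
    rw [Finset.mem_range] at hj
    rw [Finset.mem_Icc]
    omega
  · intro k hk
    rw [Finset.mem_Icc] at hk
    omega
  · intro j _
    exact Int.toNat_natCast j
  · intro k hk
    rw [Finset.mem_Icc] at hk
    obtain ⟨j, rfl⟩ := Int.eq_ofNat_of_zero_le hk.1
    have h2 : ((j:ℤ))*(3*(j:ℤ)+1) = 2*((g1 j : ℕ) : ℤ) := by
      have h := two_g1 j
      zify at h
      linear_combination -h
    have hcond : ((j:ℤ)*(3*(j:ℤ)+1) = 2*(d:ℤ)) ↔ (d = g1 j) := by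
      rw [h2]
      constructor
      · intro h; exact_mod_cast (by linarith : ((d:ℕ):ℤ) = ((g1 j : ℕ):ℤ))
      · intro h; rw [h]
    rw [if_congr hcond rfl rfl, Int.toNat_natCast, Int.coe_negOnePow_natCast]

lemma neg_part (d : ℕ) :
    (∑ k ∈ Finset.Icc (-(2*(d:ℤ)+1)) (-1:ℤ),
        if k*(3*k+1) = 2*(d:ℤ) then ((Int.negOnePow k : ℤ)) else 0)
      = ∑ j ∈ Finset.range (2*d+1), (if d = g2 (j+1) then ((-1:ℤ))^(j+1) else 0) := by
  refine Finset.sum_bij' (i := fun k _ => (-k).toNat - 1) (j := fun j _ => -((j:ℤ)+1))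
    ?_ ?_ ?_ ?_ ?_
  · intro k hk
    rw [Finset.mem_Icc] at hk
    rw [Finset.mem_range]
    omega
  · intro j hj
    rw [Finset.mem_range] at hj
    rw [Finset.mem_Icc]
    omega
  · intro k hk
    rw [Finset.mem_Icc] at hk
    omega
  · intro j _
    omega
  · intro k hk
    rw [Finset.mem_Icc] at hk
    obtain ⟨j, rfl⟩ : ∃ j : ℕ, k = -((j:ℤ)+1) := ⟨(-k).toNat - 1, by omega⟩
    have hj' : ((-(-((j:ℤ)+1))).toNat - 1) = j := by omega
    rw [hj']
    have h2 : (-((j:ℤ)+1))*(3*(-((j:ℤ)+1))+1) = 2*((g2 (j+1) : ℕ) : ℤ) := by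
      have h := two_g2 (j+1)
      zify at h
      linear_combination -h
    have hcond : ((-((j:ℤ)+1))*(3*(-((j:ℤ)+1))+1) = 2*(d:ℤ)) ↔ (d = g2 (j+1)) := by
      rw [h2]
      constructor
      · intro h; exact_mod_cast (by linarith : ((d:ℕ):ℤ) = ((g2 (j+1) : ℕ):ℤ))
      · intro h; rw [h]
    have hval : (Int.negOnePow (-((j:ℤ)+1)) : ℤ) = (-1:ℤ)^(j+1) := by
      rw [Int.negOnePow_neg, show ((j:ℤ)+1) = ((j+1 : ℕ) : ℤ) by push_cast; ring,
        Int.coe_negOnePow_natCast]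
    rw [if_congr hcond rfl rfl, hval]

lemma sign_term (d : ℕ) (k : ℤ) (hcond : k * (3*k+1) = 2*(d:ℤ)) :
    (((-1 : ℤˣ) ^ ((3 * k ^ 2 + 7 * k) / 2) : ℤˣ) : ℤ)
      = (-1:ℤ)^d * (Int.negOnePow k : ℤ) := by
  have h5 : (3*k^2+7*k)/2 = (d:ℤ) + 3*k := by
    rw [show 3*k^2+7*k = 2*((d:ℤ)+3*k) by linear_combination hcond,
      Int.mul_ediv_cancel_left _ (by norm_num)]
  rw [h5, ← Int.negOnePow_def,
    show (d:ℤ) + 3*k = ((d:ℤ) + k) + 2*k by ring,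
    Int.negOnePow_add, Int.negOnePow_two_mul, mul_one, Int.negOnePow_add,
    Units.val_mul, Int.coe_negOnePow_natCast]

lemma coeff_pent (d : ℕ) :
    PowerSeries.coeff d pentSignSum = (-1:ℤ)^d * PowerSeries.coeff d (euler 1) := by
  rw [pentSignSum, PowerSeries.coeff_mk]
  have step1 : ∀ k ∈ Finset.Icc (-(2 * (d : ℤ) + 1)) (2 * (d : ℤ) + 1),
      (if k * (3 * k + 1) = 2 * (d : ℤ)
        then (((-1 : ℤˣ) ^ ((3 * k ^ 2 + 7 * k) / 2) : ℤˣ) : ℤ) else 0)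
      = (-1:ℤ)^d * (if k * (3 * k + 1) = 2 * (d : ℤ) then (Int.negOnePow k : ℤ) else 0) := by
    intro k _
    by_cases h : k * (3 * k + 1) = 2 * (d : ℤ)
    · rw [if_pos h, if_pos h, sign_term d k h]
    · rw [if_neg h, if_neg h, mul_zero]
  rw [Finset.sum_congr rfl step1, ← Finset.mul_sum]
  congr 1
  -- split the Icc sum
  have hsplit : Finset.Icc (-(2 * (d : ℤ) + 1)) (2 * (d : ℤ) + 1)
      = Finset.Icc (-(2 * (d : ℤ) + 1)) (-1:ℤ) ∪ Finset.Icc (0:ℤ) (2 * (d : ℤ) + 1) := by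
    ext x
    simp only [Finset.mem_Icc, Finset.mem_union]
    omega
  have hdisj : Disjoint (Finset.Icc (-(2 * (d : ℤ) + 1)) (-1:ℤ))
      (Finset.Icc (0:ℤ) (2 * (d : ℤ) + 1)) := by
    rw [Finset.disjoint_left]
    intro a ha hb
    rw [Finset.mem_Icc] at ha hb
    omega
  rw [hsplit, Finset.sum_union hdisj, pos_part, neg_part]
  -- shrink the ranges
  have hg1 : ∀ j ∈ Finset.range (2*d+2), j ∉ Finset.range (d+2) →
      (if d = g1 j then ((-1:ℤ))^j else 0) = 0 := by
    intro j _ hj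
    rw [Finset.mem_range] at hj
    rw [if_neg]
    have := g1_ge j
    omega
  have hg2 : ∀ j ∈ Finset.range (2*d+1), j ∉ Finset.range (d+1) →
      (if d = g2 (j+1) then ((-1:ℤ))^(j+1) else 0) = 0 := by
    intro j _ hj
    rw [Finset.mem_range] at hj
    rw [if_neg]
    have := g2_ge (j+1)
    omega
  rw [← Finset.sum_subset (Finset.range_subset_range.mpr (by omega : d+2 ≤ 2*d+2)) hg1,
    ← Finset.sum_subset (Finset.range_subset_range.mpr (by omega : d+1 ≤ 2*d+1)) hg2]
  rw [coeff_euler_one, coeff_Pfin]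
  rw [Finset.sum_range_succ' (fun j => if d = g1 j then ((-1:ℤ))^j else 0) (d+1)]
  have expand : ∀ j ∈ Finset.range (d+1),
      (-1:ℤ)^(j+1) * ((if d = g1 (j+1) then 1 else 0) + (if d = g2 (j+1) then 1 else 0))
      = (if d = g1 (j+1) then ((-1:ℤ))^(j+1) else 0)
        + (if d = g2 (j+1) then ((-1:ℤ))^(j+1) else 0) := by
    intro j _
    rw [mul_add, mul_ite, mul_one, mul_zero, mul_ite, mul_one, mul_zero]
  rw [Finset.sum_congr rfl expand, Finset.sum_add_distrib]
  have hzero : (if d = g1 0 then ((-1:ℤ))^(0:ℕ) else 0) = (if d = 0 then 1 else 0) := by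
    have : g1 0 = 0 := rfl
    rw [this, pow_zero]
  rw [hzero]
  ring

lemma rescale_euler_one : PowerSeries.rescale (-1 : ℤ) (euler 1) = pentSignSum := by
  ext d
  rw [PowerSeries.coeff_rescale, coeff_pent d]

----PART4----

lemma teq_rescale (d m : ℕ) (hm : d + 1 ≤ m) :
    PowerSeries.coeff d (PowerSeries.rescale (-1 : ℤ) (euler 1))
      = PowerSeries.coeff d (∏ n ∈ Finset.range m, (1 - (-PowerSeries.X : PS) ^ (n + 1))) := by
  have hres : PowerSeries.rescale (-1 : ℤ) (∏ n ∈ Finset.range m, (1 - (PowerSeries.X : PS) ^ (n + 1)))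
      = ∏ n ∈ Finset.range m, (1 - (-PowerSeries.X : PS) ^ (n + 1)) := by
    rw [map_prod]
    refine Finset.prod_congr rfl fun n _ => ?_
    rw [map_sub, map_one, map_pow, PowerSeries.rescale_X]
    have hC : (PowerSeries.C (R := ℤ)) (-1 : ℤ) = -1 := by rw [map_neg, map_one]
    rw [hC, neg_one_mul]
  have h1 : PowerSeries.coeff d (euler 1)
      = PowerSeries.coeff d (∏ n ∈ Finset.range m, (1 - (PowerSeries.X : PS) ^ (n + 1))) := by
    rw [euler]
    have := teq_euler 1 d (le_refl 1) hm
    simpa only [one_mul] using this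
  rw [PowerSeries.coeff_rescale, h1, ← PowerSeries.coeff_rescale, hres]

lemma main_prod : (euler 2) ^ 3
    = PowerSeries.rescale (-1 : ℤ) (euler 1) * euler 1 * euler 4 := by
  ext d
  set M := d + 1 with hM
  have T2a : TEq (d+1) (euler 2) (∏ n ∈ Finset.range (2*M), (1 - (PowerSeries.X : PS) ^ (2 * (n + 1)))) := by
    intro d' hd'
    rw [euler]
    exact teq_euler 2 d' (by omega) (by omega)
  have T2b : TEq (d+1) (euler 2) (∏ n ∈ Finset.range M, (1 - (PowerSeries.X : PS) ^ (2 * (n + 1)))) := by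
    intro d' hd'
    rw [euler]
    exact teq_euler 2 d' (by omega) (by omega)
  have T4 : TEq (d+1) (euler 4) (∏ n ∈ Finset.range M, (1 - (PowerSeries.X : PS) ^ (4 * (n + 1)))) := by
    intro d' hd'
    rw [euler]
    exact teq_euler 4 d' (by omega) (by omega)
  have T1 : TEq (d+1) (euler 1) (∏ n ∈ Finset.range (2*M), (1 - (PowerSeries.X : PS) ^ (n + 1))) := by
    intro d' hd'
    rw [euler]
    have := teq_euler 1 d' (le_refl 1) (show d' + 1 ≤ 2*M by omega)
    simpa only [one_mul] using this
  have TN : TEq (d+1) (PowerSeries.rescale (-1 : ℤ) (euler 1))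
      (∏ n ∈ Finset.range (2*M), (1 - (-PowerSeries.X : PS) ^ (n + 1))) := by
    intro d' hd'
    exact teq_rescale d' (2*M) (by omega)
  have hpow : (euler 2) ^ 3 = euler 2 * euler 2 * euler 2 := by ring
  have TL := (T2a.mul T2b).mul T2b
  have TR := (TN.mul T1).mul T4
  rw [hpow, TL d (by omega), TR d (by omega)]
  rw [show (∏ n ∈ Finset.range (2*M), (1 - (PowerSeries.X : PS) ^ (2 * (n + 1)))) *
        (∏ n ∈ Finset.range M, (1 - (PowerSeries.X : PS) ^ (2 * (n + 1)))) *
        (∏ n ∈ Finset.range M, (1 - (PowerSeries.X : PS) ^ (2 * (n + 1))))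
      = (∏ n ∈ Finset.range (2*M), (1 - (PowerSeries.X : PS) ^ (2 * (n + 1)))) *
        (∏ n ∈ Finset.range M, (1 - (PowerSeries.X : PS) ^ (2 * (n + 1)))) ^ 2 by ring,
    ← finite_rearrange M]

/-- (q²;q²)_∞³/((q;q)_∞(q⁴;q⁴)_∞) = ∑_{n∈ℤ} (−1)^((3n²+7n)/2) q^(n(3n+1)/2). -/
theorem quintuple_specialization :
    (euler 2) ^ 3 * eulerInv 1 * eulerInv 4 = pentSignSum := by
  calc (euler 2) ^ 3 * eulerInv 1 * eulerInv 4
      = (PowerSeries.rescale (-1 : ℤ) (euler 1)) * (euler 1 * eulerInv 1) * (euler 4 * eulerInv 4) := by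
        rw [main_prod]; ring
    _ = PowerSeries.rescale (-1 : ℤ) (euler 1) := by
        rw [euler_mul_inv 1 (by norm_num), euler_mul_inv 4 (by norm_num), mul_one, mul_one]
    _ = pentSignSum := rescale_euler_one
end

section
/- Let p be a prime with p ≡ 5 or 11 (mod 24), and let N be a positive integer of the form p²n + pr + (p²−1)/24 with n ≥ 0 and 1 ≤ r ≤ p−1. Then 24N + 1 cannot be written as (6m+1)² + 48k² for any integers m and k. -/
/-- For an odd prime `p ≡ 2 mod 3`, `-3` is not a square in `ZMod p`. -/
lemma neg_three_not_sq (p : ℕ) (hp : p.Prime) (h2 : p % 2 = 1) (h3 : p % 3 = 2)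
    (u : ZMod p) : u ^ 2 ≠ -3 := by
  haveI : Fact p.Prime := ⟨hp⟩
  intro h
  have hp2 : (2 : ZMod p) ≠ 0 := by
    intro h0
    have : p ∣ 2 := (ZMod.natCast_eq_zero_iff 2 p).mp (by exact_mod_cast h0)
    have := Nat.le_of_dvd two_pos this
    have := hp.two_le
    omega
  set ω : ZMod p := (u - 1) / 2 with hω
  have h2ω : (2 : ZMod p) * ω = u - 1 := by rw [hω]; field_simp
  have h4 : (ω ^ 2 + ω + 1) * 4 = 0 := by
    linear_combination (2 * ω + 1 + u) * h2ω + h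
  have hsq : ω ^ 2 + ω + 1 = 0 := by
    rcases mul_eq_zero.mp h4 with h' | h'
    · exact h'
    · exact absurd h' (by
        have : (4 : ZMod p) = 2 * 2 := by norm_num
        rw [this]
        exact mul_ne_zero hp2 hp2)
  have hcube : ω ^ 3 = 1 := by
    have h' : ω ^ 3 - 1 = (ω - 1) * (ω ^ 2 + ω + 1) := by ring
    rw [hsq, mul_zero] at h'
    exact sub_eq_zero.mp h'
  have hne1 : ω ≠ 1 := by
    intro h1
    rw [h1] at hsq
    have h30 : ((3 : ℕ) : ZMod p) = 0 := by push_cast; linear_combination hsq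
    have : p ∣ 3 := (ZMod.natCast_eq_zero_iff 3 p).mp h30
    have := Nat.le_of_dvd (by norm_num) this
    omega
  have hne0 : ω ≠ 0 := by
    intro h0
    rw [h0] at hcube
    simp at hcube
  have hord : orderOf ω = 3 := by
    have hdvd : orderOf ω ∣ 3 := orderOf_dvd_of_pow_eq_one hcube
    rcases (Nat.prime_three.eq_one_or_self_of_dvd _ hdvd) with h' | h'
    · exact absurd (orderOf_eq_one_iff.mp h') hne1
    · exact h'
  have hdvd : orderOf ω ∣ p - 1 := ZMod.orderOf_dvd_card_sub_one hne0
  rw [hord] at hdvd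
  obtain ⟨c, hc⟩ := hdvd
  have := hp.two_le
  omega

theorem no_representation (p : ℕ) (hp : p.Prime) (h24 : p % 24 = 5 ∨ p % 24 = 11)
    (n r N : ℕ) (hr1 : 1 ≤ r) (hr2 : r ≤ p - 1)
    (hN : N = p ^ 2 * n + p * r + (p ^ 2 - 1) / 24) (hNpos : 0 < N) :
    ¬ ∃ m k : ℤ, 24 * (N : ℤ) + 1 = (6 * m + 1) ^ 2 + 48 * k ^ 2 := by
  haveI : Fact p.Prime := ⟨hp⟩
  rintro ⟨m, k, h⟩
  have h1 : p ^ 2 % 24 = 1 := by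
    rw [Nat.pow_mod]
    rcases h24 with h' | h' <;> rw [h']
  have hs : 24 * ((p ^ 2 - 1) / 24) + 1 = p ^ 2 := by omega
  have hsZ : 24 * (((p ^ 2 - 1) / 24 : ℕ) : ℤ) + 1 = (p : ℤ) ^ 2 := by
    exact_mod_cast congrArg (Nat.cast : ℕ → ℤ) hs
  have keyN : 24 * N + 1 = p * (24 * p * n + 24 * r + p) := by
    subst hN
    have e1 : 24 * (p ^ 2 * n + p * r + (p ^ 2 - 1) / 24) + 1
        = 24 * p ^ 2 * n + 24 * (p * r) + (24 * ((p ^ 2 - 1) / 24) + 1) := by ring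
    rw [e1, hs]
    ring
  have key : 24 * (N : ℤ) + 1 = (p : ℤ) * (24 * p * n + 24 * r + p) := by
    exact_mod_cast congrArg (Nat.cast : ℕ → ℤ) keyN
  -- reduce mod p
  have hkey0 : ((6 * (m : ZMod p) + 1)) ^ 2 + 48 * (k : ZMod p) ^ 2 = 0 := by
    have := congrArg (Int.cast : ℤ → ZMod p) (h ▸ key)
    push_cast at this
    simp only [ZMod.natCast_self, zero_mul] at this
    linear_combination this
  have h2 : p % 2 = 1 := by omega
  have h3 : p % 3 = 2 := by omega
  have h4ne : (4 : ZMod p) ≠ 0 := by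
    intro h0
    have : p ∣ 4 := (ZMod.natCast_eq_zero_iff 4 p).mp (by exact_mod_cast h0)
    have := Nat.le_of_dvd (by norm_num) this
    omega
  have hk0 : (k : ZMod p) = 0 := by
    by_contra hk
    have hu : ((6 * (m : ZMod p) + 1) / (4 * (k : ZMod p))) ^ 2 = -3 := by
      field_simp
      linear_combination hkey0
    exact neg_three_not_sq p hp h2 h3 _ hu
  have ha0 : (6 * (m : ZMod p) + 1) = 0 := by
    rw [hk0] at hkey0
    have h' : (6 * (m : ZMod p) + 1) ^ 2 = 0 := by linear_combination hkey0
    exact pow_eq_zero_iff (by norm_num) |>.mp h'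
  have hdk : (p : ℤ) ∣ k := by
    rw [← ZMod.intCast_zmod_eq_zero_iff_dvd]
    exact_mod_cast hk0
  have hda : (p : ℤ) ∣ 6 * m + 1 := by
    rw [← ZMod.intCast_zmod_eq_zero_iff_dvd]
    push_cast
    exact ha0
  obtain ⟨a, ha⟩ := hda
  obtain ⟨b, hb⟩ := hdk
  have hppos : (0 : ℤ) < p := by exact_mod_cast hp.pos
  have hsq2 : (p : ℤ) * (24 * p * n + 24 * r + p) = (p : ℤ) ^ 2 * (a ^ 2 + 48 * b ^ 2) := by
    rw [← key, h, ha, hb]; ring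
  have hdM : (p : ℤ) ∣ 24 * (p : ℤ) * n + 24 * r + p := by
    refine ⟨a ^ 2 + 48 * b ^ 2, ?_⟩
    have h' : (p : ℤ) * (24 * (p : ℤ) * n + 24 * r + p)
        = (p : ℤ) * ((p : ℤ) * (a ^ 2 + 48 * b ^ 2)) := by linear_combination hsq2
    have h'' := mul_left_cancel₀ (ne_of_gt hppos) h'
    linarith [h''] 
  have hdr : (p : ℤ) ∣ 24 * (r : ℤ) := by
    have h' : (p : ℤ) ∣ 24 * (p : ℤ) * n + p := ⟨24 * n + 1, by ring⟩
    have hsub := dvd_sub hdM h'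
    have e : (24 * (p : ℤ) * n + 24 * r + p) - (24 * (p : ℤ) * n + p) = 24 * (r : ℤ) := by ring
    rwa [e] at hsub
  have hdrN : p ∣ 24 * r := by exact_mod_cast hdr
  have hcop : p.Coprime 24 := (hp.coprime_iff_not_dvd).mpr (fun hd => by
    have hle24 := Nat.le_of_dvd (by norm_num) hd
    have h2le := hp.two_le
    interval_cases p <;> omega)
  have hpr : p ∣ r := hcop.dvd_of_dvd_mul_left hdrN
  have hle : p ≤ r := Nat.le_of_dvd (by omega) hpr
  have h2le := hp.two_le
  omega
end
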